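/- arXiv:2504.11538 — 13 statements merged into one kernel-verified Lean document; each statement's English description precedes it below -/
import Mathlib

section
/- Let M be a metric space. The following are equivalent: (i) M is a finite set; (ii) C(M,ℝ) is a finitely generated ℝ-module (a finite ℝ-algebra); (iii) every element of C(M,ℝ) is integral over ℝ, i.e. satisfies a monic polynomial equation with real coefficients. -/
/-- For a metric space `M`, the following are equivalent:
(i) `M` is finite; (ii) `C(M, ℝ)` is a finitely generated `ℝ`-module;
(iii) every element of `C(M, ℝ)` is integral over `ℝ`. -/
theorem finite_iff_finite_algebra_iff_integral {M : Type*} [MetricSpace M] :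
    (Finite M ↔ Module.Finite ℝ C(M, ℝ)) ∧
      (Finite M ↔ ∀ f : C(M, ℝ), IsIntegral ℝ f) := by
  have h1 : Finite M → Module.Finite ℝ C(M, ℝ) := by
    intro hfin
    haveI := hfin
    haveI : DiscreteTopology M := inferInstance
    let φ : (M → ℝ) →ₗ[ℝ] C(M, ℝ) :=
      { toFun := fun g => ⟨g, continuous_of_discreteTopology⟩
        map_add' := fun _ _ => rfl
        map_smul' := fun _ _ => rfl }
    exact Module.Finite.of_surjective φ (fun f => ⟨⇑f, rfl⟩)
  have h2 : Module.Finite ℝ C(M, ℝ) → ∀ f : C(M, ℝ), IsIntegral ℝ f := by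
    intro h f
    haveI := h
    exact IsIntegral.of_finite ℝ f
  have h3 : (∀ f : C(M, ℝ), IsIntegral ℝ f) → Finite M := by
    intro hint
    classical
    by_contra hfin
    haveI : Infinite M := not_finite_iff_infinite.mp hfin
    -- M is discrete: each point is isolated
    haveI : DiscreteTopology M := by
      apply discreteTopology_iff_isOpen_singleton.mpr
      intro a
      obtain ⟨p, hp, hpz⟩ := hint ⟨fun x => dist x a, (continuous_id.dist continuous_const)⟩
      -- values of this function are roots of p
      have key : ∀ x : M, Polynomial.eval (dist x a) p = 0 := by
        intro x
        let ev : C(M, ℝ) →ₐ[ℝ] ℝ :=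
          { toFun := fun f => f x
            map_one' := rfl
            map_mul' := fun _ _ => rfl
            map_zero' := rfl
            map_add' := fun _ _ => rfl
            commutes' := fun r => rfl }
        rw [← Polynomial.aeval_def] at hpz
        have := congrArg ev hpz
        rw [← Polynomial.aeval_algHom_apply] at this
        simp [Polynomial.aeval_def, Polynomial.eval₂_eq_eval_map] at this; exact this
      -- the set of distances is finite, so 0 is isolated in it
      have hpne : p ≠ 0 := hp.ne_zero
      have hsub : (Set.range fun x : M => dist x a) ⊆ ↑p.roots.toFinset := by
        rintro _ ⟨x, rfl⟩
        simp [Polynomial.mem_roots, hpne, key x]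
      have hfinset : (Set.range fun x : M => dist x a).Finite :=
        Set.Finite.subset (p.roots.toFinset : Finset ℝ).finite_toSet hsub
      -- find ε > 0 such that no distance lies in (0, ε)
      obtain ⟨ε, hε, hball⟩ : ∃ ε > 0, ∀ x : M, dist x a < ε → dist x a = 0 := by
        set S := {d ∈ (Set.range fun x : M => dist x a) | 0 < d} with hS
        have hSfin : S.Finite := hfinset.subset (Set.sep_subset _ _)
        rcases S.eq_empty_or_nonempty with hne | hne
        · refine ⟨1, one_pos, fun x _ => ?_⟩
          by_contra h
          have hx : dist x a ∈ S := ⟨⟨x, rfl⟩, lt_of_le_of_ne dist_nonneg (Ne.symm h)⟩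
          rw [hne] at hx
          exact hx
        · obtain ⟨d, hdS, hdmin⟩ := Set.exists_min_image S id hSfin hne
          refine ⟨d, hdS.2, fun x hx => ?_⟩
          by_contra h
          have hxS : dist x a ∈ S := ⟨⟨x, rfl⟩, lt_of_le_of_ne dist_nonneg (Ne.symm h)⟩
          exact absurd (hdmin _ hxS) (not_le.mpr hx)
      -- so the ball of radius ε around a is {a}
      have : IsOpen ({a} : Set M) := by
        have : Metric.ball a ε = {a} := by
          ext x
          simp only [Metric.mem_ball, Set.mem_singleton_iff]
          constructor
          · intro hx
            have := hball x hx
            exact dist_eq_zero.mp this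
          · rintro rfl
            simpa using hε
        rw [← this]
        exact Metric.isOpen_ball
      exact this
    -- now build a continuous function with infinite range
    let e := Infinite.natEmbedding M
    let g : M → ℝ := fun x => if h : ∃ n, e n = x then (h.choose : ℝ) else 0
    have hg : ∀ n, g (e n) = n := by
      intro n
      have h : ∃ m, e m = e n := ⟨n, rfl⟩
      have : h.choose = n := e.injective h.choose_spec
      simp only [g, dif_pos h, this]
    obtain ⟨p, hp, hpz⟩ := hint ⟨g, continuous_of_discreteTopology⟩
    have key : ∀ x : M, Polynomial.eval (g x) p = 0 := by
      intro x
      let ev : C(M, ℝ) →ₐ[ℝ] ℝ :=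
        { toFun := fun f => f x
          map_one' := rfl
          map_mul' := fun _ _ => rfl
          map_zero' := rfl
          map_add' := fun _ _ => rfl
          commutes' := fun r => rfl }
      rw [← Polynomial.aeval_def] at hpz
      have := congrArg ev hpz
      rw [← Polynomial.aeval_algHom_apply] at this
      simp [Polynomial.aeval_def, Polynomial.eval₂_eq_eval_map] at this; exact this
    have hpne : p ≠ 0 := hp.ne_zero
    have hfinroots : (↑p.roots.toFinset : Set ℝ).Finite := (p.roots.toFinset).finite_toSet
    have : Set.Infinite (↑p.roots.toFinset : Set ℝ) := by
      refine Set.infinite_of_injective_forall_mem (f := fun n : ℕ => (n : ℝ))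
        (fun a b hab => Nat.cast_injective hab) (fun n => ?_)
      have := key (e n)
      rw [hg n] at this
      simp [Polynomial.mem_roots, hpne, this]
    exact this hfinroots
  exact ⟨⟨h1, fun h => h3 (h2 h)⟩, ⟨fun h => h2 (h1 h), h3⟩⟩
end

section
/- Let M be a metric space, N a topological space and π : M → N a continuous map such that every element of C(M,ℝ) is integral over C(N,ℝ) via the homomorphism φ_π : C(N,ℝ) → C(M,ℝ), f ↦ f∘π. Then every fiber π⁻¹(y), y ∈ N, is a finite set. -/
open ContinuousMap

/-- The ring homomorphism `φ_π : C(N, ℝ) →+* C(M, ℝ)`, `f ↦ f ∘ π`, induced by a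
continuous map `π : M → N`. -/
noncomputable def phiPi {M N : Type*} [TopologicalSpace M] [TopologicalSpace N]
    (π : C(M, N)) : C(N, ℝ) →+* C(M, ℝ) :=
  (ContinuousMap.compRightAlgHom ℝ ℝ π).toRingHom

/-- Let `M` be a metric space, `N` a topological space and `π : M → N`
a continuous map such that every element of `C(M, ℝ)` is integral over `C(N, ℝ)` via
`φ_π`. Then every fiber of `π` is finite. -/
theorem fibers_finite_of_integral {M N : Type*} [MetricSpace M] [TopologicalSpace N]
    (π : C(M, N)) (hint : (phiPi π).IsIntegral) (y : N) :
    (⇑π ⁻¹' {y}).Finite := by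
  set F : Set M := ⇑π ⁻¹' {y} with hF
  set K : Set M := closure F with hKdef
  -- Step 1: every continuous real function has finite image on K
  have key : ∀ g : C(M, ℝ), ((⇑g) '' K).Finite := by
    intro g
    obtain ⟨p, hpm, hp0⟩ := hint g
    -- the polynomial with coefficients evaluated at y
    set evy : C(N, ℝ) →+* ℝ := (ContinuousMap.evalAlgHom ℝ ℝ y).toRingHom with hevy
    set q : Polynomial ℝ := p.map evy with hq
    have hqne : q ≠ 0 := (hpm.map _).ne_zero
    have hfinF : ((⇑g) '' F).Finite := by
      apply (Polynomial.finite_setOf_isRoot hqne).subset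
      rintro _ ⟨x, hx, rfl⟩
      have hxy : π x = y := hx
      set evx : C(M, ℝ) →+* ℝ := (ContinuousMap.evalAlgHom ℝ ℝ x).toRingHom with hevx
      have hcomp : evx.comp (phiPi π) = evy := by
        ext f
        simp [hevx, hevy, phiPi, hxy]
      have h1 : evx (Polynomial.eval₂ (phiPi π) g p) = 0 := by
        rw [hp0]; exact map_zero _
      rw [Polynomial.hom_eval₂, hcomp] at h1
      show q.eval (g x) = 0
      rw [hq, Polynomial.eval_map]
      exact h1
    have hsub : (⇑g) '' K ⊆ (⇑g) '' F := by
      have hcl : IsClosed ((⇑g) '' F) := hfinF.isClosed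
      calc (⇑g) '' K ⊆ closure ((⇑g) '' F) :=
            image_closure_subset_closure_image g.continuous
        _ = (⇑g) '' F := hcl.closure_eq
    exact hfinF.subset hsub
  -- Step 2: K is discrete
  have hisol : ∀ x₀ ∈ K, ∃ ε > 0, ∀ z ∈ K, dist z x₀ < ε → z = x₀ := by
    intro x₀ hx₀
    set g : C(M, ℝ) := ⟨fun z => dist z x₀, (continuous_id.dist continuous_const)⟩ with hg
    have hfin : ((⇑g) '' K).Finite := key g
    set D : Set ℝ := ((⇑g) '' K) \ {0} with hD
    have hDfin : D.Finite := hfin.diff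
    rcases D.eq_empty_or_nonempty with hDe | hDne
    · refine ⟨1, one_pos, fun z hz hdz => ?_⟩
      have : dist z x₀ ∈ (⇑g) '' K := ⟨z, hz, rfl⟩
      by_contra hne
      have : dist z x₀ ∈ D := ⟨this, by
        simp only [Set.mem_singleton_iff]
        exact dist_ne_zero.mpr hne⟩
      rw [hDe] at this
      exact this
    · obtain ⟨a, haD, hmin⟩ := Set.exists_min_image D id hDfin hDne
      have ha0 : 0 < a := by
        rcases haD with ⟨⟨z, hz, hza⟩, hane⟩
        have h1 : a ≠ 0 := by simpa using hane
        have h2 : 0 ≤ a := hza ▸ dist_nonneg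
        exact lt_of_le_of_ne h2 (Ne.symm h1)
      refine ⟨a, ha0, fun z hz hdz => ?_⟩
      by_contra hne
      have hmem : dist z x₀ ∈ D :=
        ⟨⟨z, hz, rfl⟩, by simp [dist_ne_zero.mpr hne]⟩
      have := hmin _ hmem
      simp only [id] at this
      linarith
  -- Step 3: suppose the fiber is infinite, derive a contradiction
  by_contra hFinf
  have hKinf : K.Infinite := fun hKfin =>
    hFinf (hKfin.subset subset_closure)
  have hdisc : DiscreteTopology K := by
    rw [discreteTopology_subtype_iff]
    intro x hx
    obtain ⟨ε, hε, hball⟩ := hisol x hx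
    rw [Filter.inf_principal_eq_bot]
    rw [mem_nhdsWithin]
    refine ⟨Metric.ball x ε, Metric.isOpen_ball, Metric.mem_ball_self hε, ?_⟩
    rintro z ⟨hzball, hzne⟩ hzK
    exact hzne (hball z hzK (Metric.mem_ball.mp hzball))
  -- build a continuous function with infinite image on K
  have e : ℕ ↪ K := hKinf.natEmbedding
  set u : K → ℝ := fun z => ((Function.invFun e z : ℕ) : ℝ) with hu
  have hucont : Continuous u := continuous_of_discreteTopology
  obtain ⟨g, hgr⟩ :=
    (ContinuousMap.mk u hucont).exists_restrict_eq (isClosed_closure (s := F))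
  have hval : ∀ k : ℕ, g ((e k : K) : M) = (k : ℝ) := by
    intro k
    have h1 : g.restrict K (e k) = u (e k) := by rw [hgr]; rfl
    have h2 : u (e k) = (k : ℝ) := by
      simp only [hu]
      rw [Function.leftInverse_invFun e.injective]
    rw [← h2, ← h1]
    rfl
  have hsub : Set.range (fun k : ℕ => (k : ℝ)) ⊆ (⇑g) '' K := by
    rintro _ ⟨k, rfl⟩
    exact ⟨(e k : K), (e k).2, hval k⟩
  have hrinf : (Set.range (fun k : ℕ => (k : ℝ))).Infinite :=
    Set.infinite_range_of_injective (fun a b h => Nat.cast_injective h)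
  exact hrinf ((key g).subset hsub)
end

section
/- Let M and N be metric spaces and π : M → N a continuous, closed and surjective map. Let Y ⊆ N be closed, set X := π⁻¹(Y), and suppose the restriction π|_{M∖X} : M∖X → N∖Y is injective. Then C(M,ℝ) is a finitely generated module over C(N,ℝ) via φ_π : f ↦ f∘π if and only if C(X,ℝ) is a finitely generated module over C(Y,ℝ) via the homomorphism g ↦ g∘(π|_X). -/
open ContinuousMap

/-- Let `M, N` be metric spaces, `π : M → N` continuous, closed and
surjective, `Y ⊆ N` closed, `X := π⁻¹(Y)`, and suppose `π` is injective on `M ∖ X`.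
Then `C(M, ℝ)` is a finitely generated `C(N, ℝ)`-module via `φ_π` iff `C(X, ℝ)` is a
finitely generated `C(Y, ℝ)`-module via `g ↦ g ∘ (π|_X)`. -/
theorem finite_iff_finite_on_closed_part {M N : Type*} [MetricSpace M] [MetricSpace N]
    (π : C(M, N)) (hclosed : IsClosedMap π) (hsurj : Function.Surjective π)
    (Y : Set N) (hY : IsClosed Y) (hinj : Set.InjOn π (⇑π ⁻¹' Y)ᶜ) :
    (phiPi π).Finite ↔
      (phiPi (⟨fun x : (⇑π ⁻¹' Y) => (⟨π x, x.2⟩ : Y),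
        (π.continuous.comp continuous_subtype_val).subtype_mk _⟩ :
          C((⇑π ⁻¹' Y : Set M), (Y : Set N)))).Finite := by
  classical
  set X : Set M := ⇑π ⁻¹' Y with hX
  set π' : C((X : Set M), (Y : Set N)) :=
    (⟨fun x : (⇑π ⁻¹' Y) => (⟨π x, x.2⟩ : Y),
        (π.continuous.comp continuous_subtype_val).subtype_mk _⟩ :
          C((⇑π ⁻¹' Y : Set M), (Y : Set N))) with hπ'
  have hXc : IsClosed X := hY.preimage π.continuous
  let rM : C(M, ℝ) →+* C(X, ℝ) := phiPi ⟨Subtype.val, continuous_subtype_val⟩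
  let σ : C(N, ℝ) →+* C(Y, ℝ) := phiPi ⟨Subtype.val, continuous_subtype_val⟩
  have hrM : Function.Surjective rM := by
    intro g
    obtain ⟨f, hf⟩ := g.exists_restrict_eq hXc
    exact ⟨f, by ext x; exact DFunLike.congr_fun hf x⟩
  have hσ : Function.Surjective σ := by
    intro g
    obtain ⟨f, hf⟩ := g.exists_restrict_eq hY
    exact ⟨f, by ext x; exact DFunLike.congr_fun hf x⟩
  have hcompat : ∀ a : C(N, ℝ), rM (phiPi π a) = phiPi π' (σ a) := fun a => rfl
  -- descent of functions vanishing on X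
  have descend : ∀ g : C(M, ℝ), rM g = 0 → ∃ b : C(N, ℝ), phiPi π b = g := by
    intro g hg
    have hg0 : ∀ m, m ∈ X → g m = 0 := fun m hm => DFunLike.congr_fun hg ⟨m, hm⟩
    have hq := hclosed.isQuotientMap π.continuous hsurj
    set b0 : N → ℝ := fun y => g (hsurj y).choose with hb0
    have key : ∀ m, b0 (π m) = g m := by
      intro m
      have hm' : π (hsurj (π m)).choose = π m := (hsurj (π m)).choose_spec
      by_cases hmX : m ∈ X
      · have h2 : (hsurj (π m)).choose ∈ X := by
          have : π m ∈ Y := hmX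
          simpa only [hX, Set.mem_preimage, hm'] using this
        rw [show b0 (π m) = g (hsurj (π m)).choose from rfl, hg0 _ h2, hg0 m hmX]
      · have h2 : (hsurj (π m)).choose ∉ X := by
          intro h
          exact hmX (show π m ∈ Y from hm' ▸ h)
        exact congrArg g (hinj h2 hmX hm')
    have hb0π : b0 ∘ π = ⇑g := funext key
    have hcont : Continuous b0 := hq.continuous_iff.mpr (hb0π ▸ g.continuous)
    exact ⟨⟨b0, hcont⟩, ContinuousMap.ext key⟩
  letI : Algebra C(N, ℝ) C(M, ℝ) := (phiPi π).toAlgebra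
  letI : Algebra C(Y, ℝ) C(X, ℝ) := (phiPi π').toAlgebra
  letI : RingHomSurjective σ := ⟨hσ⟩
  let r : C(M, ℝ) →ₛₗ[σ] C(X, ℝ) :=
    { toFun := rM
      map_add' := fun a b => map_add rM a b
      map_smul' := fun a f => by
        show rM (a • f) = σ a • rM f
        rw [Algebra.smul_def, Algebra.smul_def, RingHom.algebraMap_toAlgebra,
          RingHom.algebraMap_toAlgebra, map_mul, hcompat] }
  constructor
  · intro h
    have h' : Module.Finite C(N, ℝ) C(M, ℝ) := h
    obtain ⟨S, hS⟩ := h'.fg_top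
    refine (Module.Finite.of_fg_top ⟨S.image rM, ?_⟩ : Module.Finite C(Y, ℝ) C(X, ℝ))
    rw [Finset.coe_image]
    have hmap := Submodule.map_span r (↑S : Set C(M, ℝ))
    rw [hS, Submodule.map_top, LinearMap.range_eq_top.mpr (show Function.Surjective r from hrM)]
      at hmap
    exact hmap.symm
  · intro h
    have h' : Module.Finite C(Y, ℝ) C(X, ℝ) := h
    obtain ⟨S, hS⟩ := h'.fg_top
    let EM : C(X, ℝ) → C(M, ℝ) := Function.surjInv hrM
    let EN : C(Y, ℝ) → C(N, ℝ) := Function.surjInv hσ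
    have hEM : ∀ g, rM (EM g) = g := Function.surjInv_eq hrM
    have hEN : ∀ g, σ (EN g) = g := Function.surjInv_eq hσ
    refine (Module.Finite.of_fg_top ⟨insert 1 (S.image EM), ?_⟩ : Module.Finite C(N, ℝ) C(M, ℝ))
    rw [eq_top_iff]
    rintro f -
    have hf : rM f ∈ Submodule.span C(Y, ℝ) (↑S : Set C(X, ℝ)) := hS ▸ Submodule.mem_top
    rw [Submodule.mem_span_finset] at hf
    obtain ⟨c, -, hcsum⟩ := hf
    set F : C(M, ℝ) := ∑ s ∈ S, EN (c s) • EM s with hF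
    have hterm : ∀ s a, rM (EN a • EM s) = a • s := by
      intro s a
      rw [Algebra.smul_def, RingHom.algebraMap_toAlgebra, map_mul, hcompat, hEN, hEM,
        Algebra.smul_def, RingHom.algebraMap_toAlgebra]
    have hrF : rM (f - F) = 0 := by
      have hFf : rM F = rM f := by
        rw [← hcsum, hF, map_sum]
        exact Finset.sum_congr rfl fun s _ => hterm s (c s)
      rw [map_sub, hFf, sub_self]
    obtain ⟨b, hb⟩ := descend (f - F) hrF
    have hfeq : f = b • (1 : C(M, ℝ)) + F := by
      rw [Algebra.smul_def, RingHom.algebraMap_toAlgebra, mul_one, hb]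
      ring
    rw [hfeq]
    refine add_mem (Submodule.smul_mem _ b (Submodule.subset_span ?_)) ?_
    · exact Finset.mem_coe.mpr (Finset.mem_insert_self 1 _)
    · refine Submodule.sum_mem _ fun s hs => ?_
      exact Submodule.smul_mem _ _ (Submodule.subset_span (Finset.mem_coe.mpr
        (Finset.mem_insert_of_mem (Finset.mem_image_of_mem EM hs))))
end

section
/- Let M be a topological space and let (X₁,j₁), (X₂,j₂) be two compactifications of M by compact metrizable spaces, i.e. each jᵢ : M → Xᵢ is a topological embedding with dense image. Let π : X₂ → X₁ be a continuous map with π∘j₂ = j₁ (such π is automatically surjective and satisfies π⁻¹(X₁∖j₁(M)) = X₂∖j₂(M)). Write ∂Xᵢ := Xᵢ∖jᵢ(M) and suppose ∂X₁ is closed in X₁. Then C(X₂,ℝ) is a finitely generated C(X₁,ℝ)-module via f ↦ f∘π if and only if C(∂X₂,ℝ) is a finitely generated C(∂X₁,ℝ)-module via g ↦ g∘(π|_{∂X₂}). -/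
open ContinuousMap

/-- A concrete characterization of finiteness of a ring hom between commutative rings:
there is a finite family of elements of the target such that every element is a
"linear combination" with coefficients coming from the source. -/
theorem ringHom_finite_iff_aux {A B : Type*} [CommRing A] [CommRing B] (φ : A →+* B) :
    φ.Finite ↔ ∃ (n : ℕ) (g : Fin n → B), ∀ b : B, ∃ a : Fin n → A,
      b = ∑ i, φ (a i) * g i := by
  letI : Algebra A B := φ.toAlgebra
  have halg : ∀ (a : A) (b : B), a • b = φ a * b := fun a b => by
    rw [Algebra.smul_def, RingHom.algebraMap_toAlgebra]
  constructor
  · intro h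
    haveI : Module.Finite A B := h
    obtain ⟨n, g, hg⟩ := Module.Finite.exists_fin (R := A) (M := B)
    refine ⟨n, g, fun b => ?_⟩
    have hb : b ∈ Submodule.span A (Set.range g) := hg ▸ Submodule.mem_top
    obtain ⟨a, ha⟩ := (Submodule.mem_span_range_iff_exists_fun A).1 hb
    refine ⟨a, ?_⟩
    rw [← ha]
    exact Finset.sum_congr rfl fun i _ => halg (a i) (g i)
  · rintro ⟨n, g, hg⟩
    have hspan : Submodule.span A (Set.range g) = ⊤ := by
      rw [eq_top_iff]
      intro b _
      obtain ⟨a, ha⟩ := hg b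
      refine (Submodule.mem_span_range_iff_exists_fun A).2 ⟨a, ?_⟩
      rw [ha]
      exact Finset.sum_congr rfl fun i _ => halg (a i) (g i)
    exact ⟨hspan ▸ Submodule.fg_span (Set.finite_range g)⟩

/-- Let `(X₁, j₁)` and `(X₂, j₂)` be compactifications of `M` by
compact metrizable spaces and let `π : X₂ → X₁` be continuous with `π ∘ j₂ = j₁`.
Write `∂Xᵢ := Xᵢ ∖ jᵢ(M)` (so `π` restricts to a map `ρ : ∂X₂ → ∂X₁`) and suppose
`∂X₁` is closed in `X₁`. Then `C(X₂, ℝ)` is a finitely generated `C(X₁, ℝ)`-module via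
`f ↦ f ∘ π` iff `C(∂X₂, ℝ)` is a finitely generated `C(∂X₁, ℝ)`-module via
`g ↦ g ∘ ρ`. -/
theorem finite_iff_finite_on_remainder {M X₁ X₂ : Type*} [TopologicalSpace M]
    [TopologicalSpace X₁] [CompactSpace X₁] [TopologicalSpace.MetrizableSpace X₁]
    [TopologicalSpace X₂] [CompactSpace X₂] [TopologicalSpace.MetrizableSpace X₂]
    (j₁ : C(M, X₁)) (j₂ : C(M, X₂))
    (he₁ : Topology.IsEmbedding j₁) (he₂ : Topology.IsEmbedding j₂)
    (hd₁ : DenseRange j₁) (hd₂ : DenseRange j₂)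
    (π : C(X₂, X₁)) (hπ : ∀ x : M, π (j₂ x) = j₁ x)
    (hcl : IsClosed (Set.range j₁)ᶜ)
    (ρ : C(((Set.range j₂)ᶜ : Set X₂), ((Set.range j₁)ᶜ : Set X₁)))
    (hρ : ∀ x : ((Set.range j₂)ᶜ : Set X₂), (ρ x : X₁) = π (x : X₂)) :
    (phiPi π).Finite ↔ (phiPi ρ).Finite := by
  have hphi : ∀ (f : C(X₁, ℝ)) (x : X₂), phiPi π f x = f (π x) := fun _ _ => rfl
  have hphiρ : ∀ (g : C(((Set.range j₁)ᶜ : Set X₁), ℝ)) (x : ((Set.range j₂)ᶜ : Set X₂)),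
      phiPi ρ g x = g (ρ x) := fun _ _ => rfl
  -- the preimage of the remainder is the remainder
  have hset : (Set.range ⇑j₂)ᶜ = ⇑π ⁻¹' (Set.range ⇑j₁)ᶜ := by
    ext x
    constructor
    · intro hx
      have := (ρ ⟨x, hx⟩).2
      rwa [hρ ⟨x, hx⟩] at this
    · intro hx
      intro hxr
      obtain ⟨m, rfl⟩ := hxr
      exact hx ⟨m, (hπ m).symm⟩
  have hclosed₂ : IsClosed (Set.range ⇑j₂)ᶜ := hset ▸ hcl.preimage π.continuous
  -- π is surjective
  have hsurj : Function.Surjective π := by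
    rw [← Set.range_eq_univ]
    have h1 : Set.range j₁ ⊆ Set.range π := by
      rintro y ⟨m, rfl⟩
      exact ⟨j₂ m, hπ m⟩
    have h2 : IsClosed (Set.range π) := (isCompact_range π.continuous).isClosed
    have h3 : closure (Set.range ⇑j₁) ⊆ Set.range ⇑π := by
      rw [← h2.closure_eq]
      exact closure_mono h1
    rw [hd₁.closure_range] at h3
    exact Set.eq_univ_of_univ_subset h3
  -- π is a quotient map
  have hquot : Topology.IsQuotientMap π :=
    (π.continuous.isClosedMap).isQuotientMap π.continuous hsurj
  -- π is injective away from the remainder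
  have hinj : ∀ x y : X₂, π x = π y →
      x = y ∨ (x ∈ (Set.range ⇑j₂)ᶜ ∧ y ∈ (Set.range ⇑j₂)ᶜ) := by
    intro x y hxy
    by_cases hx : x ∈ (Set.range ⇑j₂)ᶜ
    · right
      refine ⟨hx, ?_⟩
      rw [hset] at hx ⊢
      rwa [Set.mem_preimage, ← hxy]
    · left
      rw [Set.notMem_compl_iff] at hx
      obtain ⟨m, rfl⟩ := hx
      have hπy : π y ∈ Set.range j₁ := ⟨m, (hπ m).symm.trans hxy⟩
      have hy : y ∉ (Set.range ⇑j₂)ᶜ := by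
        rw [hset, Set.mem_preimage]
        exact fun h => h hπy
      rw [Set.notMem_compl_iff] at hy
      obtain ⟨m', rfl⟩ := hy
      have : j₁ m = j₁ m' := by rw [← hπ m, ← hπ m', hxy]
      rw [he₁.injective this]
  -- descent: a function vanishing on the remainder factors through π
  have hdescent : ∀ h : C(X₂, ℝ), (∀ x : ((Set.range j₂)ᶜ : Set X₂), h x = 0) →
      ∃ b : C(X₁, ℝ), phiPi π b = h := by
    intro h hh
    have hconst : ∀ x y : X₂, π x = π y → h x = h y := by
      intro x y hxy
      rcases hinj x y hxy with rfl | ⟨hx, hy⟩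
      · rfl
      · rw [hh ⟨x, hx⟩, hh ⟨y, hy⟩]
    refine ⟨⟨fun y => h (Function.surjInv hsurj y), ?_⟩, ?_⟩
    · rw [hquot.continuous_iff]
      have : (fun y => h (Function.surjInv hsurj y)) ∘ π = h := by
        funext x
        exact hconst _ _ (Function.surjInv_eq hsurj (π x))
      rw [this]
      exact h.continuous
    · ext x
      exact hconst _ _ (Function.surjInv_eq hsurj (π x))
  rw [ringHom_finite_iff_aux, ringHom_finite_iff_aux]
  constructor
  · -- from X to the remainder
    rintro ⟨n, F, hF⟩
    refine ⟨n, fun i => (F i).restrict (Set.range ⇑j₂)ᶜ, fun g => ?_⟩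
    obtain ⟨f, hf⟩ := ContinuousMap.exists_restrict_eq hclosed₂ g
    obtain ⟨a, ha⟩ := hF f
    refine ⟨fun i => (a i).restrict (Set.range ⇑j₁)ᶜ, ?_⟩
    ext x
    have h1 : g x = f x := by rw [← hf]; rfl
    have h2 : f (x : X₂) = ∑ i, a i (π (x : X₂)) * F i (x : X₂) := by
      rw [ha]; simp [hphi]
    rw [h1, h2]
    simp only [ContinuousMap.sum_apply, ContinuousMap.mul_apply]
    refine Finset.sum_congr rfl fun i _ => ?_
    rw [hphiρ, ContinuousMap.restrict_apply, ContinuousMap.restrict_apply, hρ x]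
  · -- from the remainder to X
    rintro ⟨n, g, hg⟩
    choose G hG using fun i => ContinuousMap.exists_restrict_eq hclosed₂ (g i)
    refine ⟨n + 1, Fin.cons 1 G, fun f => ?_⟩
    obtain ⟨a, ha⟩ := hg (f.restrict (Set.range ⇑j₂)ᶜ)
    choose A hA using fun i => ContinuousMap.exists_restrict_eq hcl (a i)
    set h : C(X₂, ℝ) := f - ∑ i, phiPi π (A i) * G i with hh
    have hvanish : ∀ x : ((Set.range j₂)ᶜ : Set X₂), h x = 0 := by
      intro x
      have h1 : f (x : X₂) = ∑ i, a i (ρ x) * g i x := by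
        have := congrArg (fun u => u x) ha
        simpa [hphiρ] using this
      have h2 : ∀ i, A i (π (x : X₂)) = a i (ρ x) := by
        intro i
        rw [← hA i, ContinuousMap.restrict_apply, ← hρ x]
      have h3 : ∀ i, G i (x : X₂) = g i x := by
        intro i
        rw [← hG i, ContinuousMap.restrict_apply]
      simp only [hh, ContinuousMap.sub_apply, ContinuousMap.sum_apply,
        ContinuousMap.mul_apply, hphi, h1]
      rw [sub_eq_zero]
      exact (Finset.sum_congr rfl fun i _ => by rw [h2 i, h3 i]).symm
    obtain ⟨b, hb⟩ := hdescent h hvanish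
    refine ⟨Fin.cons b A, ?_⟩
    rw [Fin.sum_univ_succ]
    simp only [Fin.cons_zero, Fin.cons_succ]
    rw [hb, hh, mul_one, sub_add_cancel]
end

section
/- Let M be a topological space, N a metric space and π : M → N a continuous closed map. Suppose there is a finite cover M = M₁ ∪ ⋯ ∪ M_k by closed subsets such that each restriction π|_{M_i} is injective. Then every f ∈ C(M,ℝ) is integral over C(N,ℝ) via φ_π : C(N,ℝ) → C(M,ℝ), g ↦ g∘π; in fact there exist g₁,…,g_k ∈ C(N,ℝ) with ∏_{i=1}^k (f − g_i∘π) = 0. -/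
open ContinuousMap Topology

/-- Let `M` be a topological space, `N` a metric space and
`π : M → N` a continuous closed map. If `M = M₁ ∪ ⋯ ∪ M_k` is a finite cover by
closed subsets with each `π|_{M_i}` injective, then every `f ∈ C(M, ℝ)` is integral
over `C(N, ℝ)` via `φ_π`; in fact there are `g₁, …, g_k ∈ C(N, ℝ)` with
`∏ i, (f - g_i ∘ π) = 0`. -/
theorem integral_of_finite_closed_cover {M N : Type*} [TopologicalSpace M]
    [MetricSpace N] (π : C(M, N)) (hclosed : IsClosedMap π)
    (k : ℕ) (Mi : Fin k → Set M) (hMi : ∀ i, IsClosed (Mi i))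
    (hcover : (⋃ i, Mi i) = Set.univ) (hinj : ∀ i, Set.InjOn π (Mi i))
    (f : C(M, ℝ)) :
    (phiPi π).IsIntegralElem f ∧
      ∃ g : Fin k → C(N, ℝ), ∏ i, (f - phiPi π (g i)) = 0 := by
  -- For each i, the map `e i : Mi i → N` is a closed embedding.
  have hg : ∀ i : Fin k, ∃ g : C(N, ℝ), ∀ x ∈ Mi i, g (π x) = f x := by
    intro i
    have hcont : Continuous (fun x : Mi i => π x) := π.continuous.comp continuous_subtype_val
    have hinj' : Function.Injective (fun x : Mi i => π x) := by
      intro a b hab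
      exact Subtype.ext (hinj i a.2 b.2 hab)
    have hcm : IsClosedMap (fun x : Mi i => π x) := by
      intro S hS
      have : IsClosed (Subtype.val '' S : Set M) := (hMi i).isClosedEmbedding_subtypeVal.isClosedMap _ hS
      have := hclosed _ this
      simpa [Set.image_image] using this
    have hce : IsClosedEmbedding (fun x : Mi i => π x) :=
      IsClosedEmbedding.of_continuous_injective_isClosedMap hcont hinj' hcm
    obtain ⟨g, hgeq⟩ := ContinuousMap.exists_extension' hce (f.restrict (Mi i))
    refine ⟨g, fun x hx => ?_⟩
    have := congrFun hgeq ⟨x, hx⟩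
    simpa using this
  choose g hg using hg
  have hprod : ∏ i, (f - phiPi π (g i)) = 0 := by
    ext x
    have hx : x ∈ ⋃ i, Mi i := hcover ▸ Set.mem_univ x
    obtain ⟨i, hi⟩ := Set.mem_iUnion.mp hx
    rw [ContinuousMap.prod_apply]
    refine Finset.prod_eq_zero (Finset.mem_univ i) ?_ |>.trans rfl
    simp only [ContinuousMap.sub_apply]
    show f x - (g i) (π x) = 0
    rw [hg i x hi]; ring
  refine ⟨?_, g, hprod⟩
  refine ⟨∏ i, (Polynomial.X - Polynomial.C (g i)), ?_, ?_⟩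
  · exact Polynomial.monic_prod_of_monic _ _ fun i _ => Polynomial.monic_X_sub_C _
  · rw [Polynomial.eval₂_finset_prod]
    simpa using hprod
end

section
/- Let p ∈ ℝ[t] be a nonconstant polynomial and let π : ℝ → ℝ be the map t ↦ p(t). Then the ring homomorphism φ_π : C(ℝ,ℝ) → C(ℝ,ℝ), f ↦ f∘π, is integral: every continuous function f : ℝ → ℝ satisfies a monic polynomial equation with coefficients of the form g∘π, g ∈ C(ℝ,ℝ). -/
open ContinuousMap

open Polynomial Filter Set Topology in
/-- On a closed set where the (closed) polynomial map is injective, any continuous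
function factors through the polynomial map. -/
lemma exists_ext_of_injOn (p : Polynomial ℝ) (hcl : IsClosedMap (fun t : ℝ => p.eval t))
    (J : Set ℝ) (hJ : IsClosed J) (hinj : Set.InjOn (fun t : ℝ => p.eval t) J)
    (f : C(ℝ, ℝ)) : ∃ g : C(ℝ, ℝ), ∀ t ∈ J, g (p.eval t) = f t := by
  set e : J → ℝ := fun x => p.eval (x : ℝ) with he
  have hec : Continuous e := p.continuous.comp continuous_subtype_val
  have heinj : Function.Injective e := fun x y hxy =>
    Subtype.ext (hinj x.2 y.2 hxy)
  have hecm : IsClosedMap e := by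
    intro C hC
    have h1 : IsClosed (Subtype.val '' C : Set ℝ) :=
      hJ.isClosedEmbedding_subtypeVal.isClosedMap C hC
    have : e '' C = (fun t : ℝ => p.eval t) '' (Subtype.val '' C) := by
      rw [Set.image_image]
    rw [this]
    exact hcl _ h1
  have hemb : IsClosedEmbedding e :=
    IsClosedEmbedding.of_continuous_injective_isClosedMap hec heinj hecm
  obtain ⟨g, hg⟩ := ContinuousMap.exists_extension hemb
    (f.comp ⟨Subtype.val, continuous_subtype_val⟩)
  refine ⟨g, fun t ht => ?_⟩
  have := DFunLike.congr_fun hg ⟨t, ht⟩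
  simp only [ContinuousMap.comp_apply, ContinuousMap.coe_mk] at this
  exact this

/-- For every nonconstant polynomial `p ∈ ℝ[t]`, the ring homomorphism
`φ_π : C(ℝ, ℝ) → C(ℝ, ℝ)`, `f ↦ f ∘ p`, induced by the polynomial map `t ↦ p(t)` is
integral. -/
theorem polynomial_map_integral (p : Polynomial ℝ) (hp : 1 ≤ p.natDegree) :
    (phiPi (⟨fun t => p.eval t, p.continuous⟩ : C(ℝ, ℝ))).IsIntegral := by
  classical
  intro f
  set π : C(ℝ, ℝ) := ⟨fun t => p.eval t, p.continuous⟩ with hπ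
  -- the polynomial map is proper, hence closed
  have hdeg : 0 < p.degree := by
    rw [← Polynomial.natDegree_pos_iff_degree_pos]; omega
  have hproper : IsProperMap (fun t : ℝ => p.eval t) := by
    rw [isProperMap_iff_tendsto_cocompact]
    refine ⟨p.continuous, ?_⟩
    have h1 : Filter.Tendsto (fun t : ℝ => ‖p.eval t‖) (Filter.cocompact ℝ) Filter.atTop :=
      p.tendsto_norm_atTop hdeg tendsto_norm_cocompact_atTop
    rw [tendsto_norm_atTop_iff_cobounded] at h1
    rwa [Metric.cobounded_eq_cocompact] at h1
  have hcl : IsClosedMap (fun t : ℝ => p.eval t) := hproper.isClosedMap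
  -- critical points
  have hd0 : p.derivative ≠ 0 := by
    intro h
    have := Polynomial.natDegree_eq_zero_of_derivative_eq_zero h
    omega
  set T : Finset ℝ := p.derivative.roots.toFinset with hT
  have hmemT : ∀ c : ℝ, deriv (fun x => p.eval x) c = 0 → c ∈ T := by
    intro c hc
    rw [Polynomial.deriv] at hc
    simp only [hT, Multiset.mem_toFinset]
    rw [Polynomial.mem_roots hd0]
    exact hc
  -- index set of intervals
  set T' : Finset EReal := insert ⊥ (insert ⊤ (T.image (fun c : ℝ => (c : EReal)))) with hT'
  set S : Finset (EReal × EReal) :=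
    (T' ×ˢ T').filter (fun q => ∀ c ∈ T, ¬(q.1 < (c : EReal) ∧ (c : EReal) < q.2)) with hS
  -- for each index, the interval is closed and p is injective on it
  have key : ∀ q : EReal × EReal, ∃ g : C(ℝ, ℝ),
      (∀ c ∈ T, ¬(q.1 < (c : EReal) ∧ (c : EReal) < q.2)) →
        ∀ t : ℝ, q.1 ≤ (t : EReal) → (t : EReal) ≤ q.2 → g (p.eval t) = f t := by
    intro q
    by_cases hq : ∀ c ∈ T, ¬(q.1 < (c : EReal) ∧ (c : EReal) < q.2)
    · set J : Set ℝ := {t : ℝ | q.1 ≤ (t : EReal) ∧ (t : EReal) ≤ q.2} with hJdef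
      have hJcl : IsClosed J := by
        have h1 : IsClosed {t : ℝ | q.1 ≤ (t : EReal)} :=
          (isClosed_Ici (a := q.1)).preimage continuous_coe_real_ereal
        have h2 : IsClosed {t : ℝ | (t : EReal) ≤ q.2} :=
          (isClosed_Iic (a := q.2)).preimage continuous_coe_real_ereal
        exact h1.inter h2
      have hinj : Set.InjOn (fun t : ℝ => p.eval t) J := by
        rintro s hs t ht hst
        by_contra hne
        rcases lt_or_gt_of_ne hne with hlt | hlt
        · obtain ⟨c, hc, hdc⟩ := exists_deriv_eq_zero hlt p.continuousOn hst
          have hcT := hmemT c hdc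
          exact hq c hcT ⟨lt_of_le_of_lt hs.1 (EReal.coe_lt_coe_iff.2 hc.1),
            lt_of_lt_of_le (EReal.coe_lt_coe_iff.2 hc.2) ht.2⟩
        · obtain ⟨c, hc, hdc⟩ := exists_deriv_eq_zero hlt p.continuousOn hst.symm
          have hcT := hmemT c hdc
          exact hq c hcT ⟨lt_of_le_of_lt ht.1 (EReal.coe_lt_coe_iff.2 hc.1),
            lt_of_lt_of_le (EReal.coe_lt_coe_iff.2 hc.2) hs.2⟩
      obtain ⟨g, hg⟩ := exists_ext_of_injOn p hcl J hJcl hinj f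
      exact ⟨g, fun _ t h1 h2 => hg t ⟨h1, h2⟩⟩
    · exact ⟨0, fun h => absurd h hq⟩
  choose g hg using key
  -- the monic polynomial
  refine ⟨∏ q ∈ S, (Polynomial.X - Polynomial.C (g q)), ?_, ?_⟩
  · exact Polynomial.monic_prod_of_monic _ _ fun q _ => Polynomial.monic_X_sub_C _
  · rw [Polynomial.eval₂_finset_prod]
    have hfac : ∀ q ∈ S, Polynomial.eval₂ (phiPi π) f (Polynomial.X - Polynomial.C (g q))
        = f - phiPi π (g q) := by
      intro q _
      rw [Polynomial.eval₂_sub, Polynomial.eval₂_X, Polynomial.eval₂_C]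
    rw [Finset.prod_congr rfl hfac]
    ext t
    rw [ContinuousMap.prod_apply]
    -- find a covering interval for t
    have hbotmem : (⊥ : EReal) ∈ T'.filter (· ≤ (t : EReal)) := by
      simp [hT']
    have htopmem : (⊤ : EReal) ∈ T'.filter ((t : EReal) ≤ ·) := by
      simp [hT']
    set a : EReal := (T'.filter (· ≤ (t : EReal))).max' ⟨⊥, hbotmem⟩ with ha
    set b : EReal := (T'.filter ((t : EReal) ≤ ·)).min' ⟨⊤, htopmem⟩ with hb
    have haT' : a ∈ T' ∧ a ≤ (t : EReal) := by
      have := Finset.max'_mem (T'.filter (· ≤ (t : EReal))) ⟨⊥, hbotmem⟩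
      rw [Finset.mem_filter] at this
      exact ⟨this.1, this.2⟩
    have hbT' : b ∈ T' ∧ (t : EReal) ≤ b := by
      have := Finset.min'_mem (T'.filter ((t : EReal) ≤ ·)) ⟨⊤, htopmem⟩
      rw [Finset.mem_filter] at this
      exact ⟨this.1, this.2⟩
    have hnc : ∀ c ∈ T, ¬(a < (c : EReal) ∧ (c : EReal) < b) := by
      rintro c hcT ⟨hac, hcb⟩
      have hcT' : (c : EReal) ∈ T' := by
        rw [hT']
        simp only [Finset.mem_insert, Finset.mem_image]
        exact Or.inr (Or.inr ⟨c, hcT, rfl⟩)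
      rcases le_total (c : EReal) (t : EReal) with hct | htc
      · have : (c : EReal) ≤ a := by
          rw [ha]
          exact Finset.le_max' (T'.filter (· ≤ (t : EReal))) (c : EReal)
            (Finset.mem_filter.2 ⟨hcT', hct⟩)
        exact absurd hac (not_lt.2 this)
      · have : b ≤ (c : EReal) := by
          rw [hb]
          exact Finset.min'_le (T'.filter ((t : EReal) ≤ ·)) (c : EReal)
            (Finset.mem_filter.2 ⟨hcT', htc⟩)
        exact absurd hcb (not_lt.2 this)
    have hqS : (a, b) ∈ S := by
      rw [hS, Finset.mem_filter]
      exact ⟨Finset.mem_product.2 ⟨haT'.1, hbT'.1⟩, hnc⟩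
    refine Finset.prod_eq_zero hqS ?_
    have hval : g (a, b) (p.eval t) = f t := hg (a, b) hnc t haT'.2 hbT'.2
    have hphi : (phiPi π (g (a, b))) t = g (a, b) (p.eval t) := rfl
    simp [hphi, hval]
end

section
/- Let π : ℝ → ℝ be the map t ↦ √(1+t²) − t. Then the ring homomorphism φ_π : C(ℝ,ℝ) → C(ℝ,ℝ), f ↦ f∘π, is not integral; in particular the identity function id_ℝ ∈ C(ℝ,ℝ) is not integral over C(ℝ,ℝ) via φ_π. -/
open ContinuousMap

/-- The continuous map `π : ℝ → ℝ`, `t ↦ √(1 + t²) − t`. -/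
noncomputable def sqrtShift : C(ℝ, ℝ) :=
  ⟨fun t => Real.sqrt (1 + t ^ 2) - t, by fun_prop⟩

open Polynomial Finset in
lemma root_abs_le {p : Polynomial ℝ} (hm : p.Monic) {x : ℝ} (hx : p.eval x = 0) :
    |x| ≤ 1 + ∑ i ∈ Finset.range p.natDegree, |p.coeff i| := by
  set n := p.natDegree with hn
  have hS : 0 ≤ ∑ i ∈ range n, |p.coeff i| :=
    Finset.sum_nonneg fun i _ => abs_nonneg _
  rcases le_or_gt |x| 1 with h | h
  · linarith
  rcases Nat.eq_zero_or_pos n with h0 | hpos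
  · exfalso
    have hp1 : p = 1 := hm.natDegree_eq_zero.mp h0
    simp [hp1] at hx
  have heval : ∑ i ∈ range n, p.coeff i * x ^ i + p.coeff n * x ^ n = 0 := by
    rw [← Finset.sum_range_succ]
    rw [eval_eq_sum_range] at hx
    exact hx
  have hc : p.coeff n = 1 := hm
  rw [hc, one_mul] at heval
  have hxn : x ^ n = -∑ i ∈ range n, p.coeff i * x ^ i := by linarith
  have hb : |x| ^ n ≤ (∑ i ∈ range n, |p.coeff i|) * |x| ^ (n - 1) := by
    calc |x| ^ n = |x ^ n| := (abs_pow x n).symm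
      _ = |∑ i ∈ range n, p.coeff i * x ^ i| := by rw [hxn, abs_neg]
      _ ≤ ∑ i ∈ range n, |p.coeff i * x ^ i| := Finset.abs_sum_le_sum_abs _ _
      _ ≤ ∑ i ∈ range n, |p.coeff i| * |x| ^ (n - 1) := by
          apply Finset.sum_le_sum
          intro i hi
          rw [abs_mul, abs_pow]
          refine mul_le_mul_of_nonneg_left ?_ (abs_nonneg _)
          exact pow_le_pow_right₀ h.le (Nat.le_sub_one_of_lt (Finset.mem_range.mp hi))
      _ = (∑ i ∈ range n, |p.coeff i|) * |x| ^ (n - 1) := by rw [Finset.sum_mul]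
  have hxp : |x| ^ n = |x| * |x| ^ (n - 1) := by
    rw [← pow_succ']
    congr 1
    omega
  have hpow : 0 < |x| ^ (n - 1) := pow_pos (lt_trans one_pos h) _
  rw [hxp] at hb
  have : |x| ≤ ∑ i ∈ range n, |p.coeff i| := le_of_mul_le_mul_right hb hpow
  linarith

/-- Evaluation at a point as a ring hom. -/
noncomputable def evAt (t : ℝ) : C(ℝ, ℝ) →+* ℝ :=
  (Pi.evalRingHom (fun _ : ℝ => ℝ) t).comp ContinuousMap.coeFnRingHom

lemma sqrtShift_mem_Icc {t : ℝ} (ht : 0 ≤ t) : sqrtShift t ∈ Set.Icc (0 : ℝ) 1 := by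
  have hs : sqrtShift t = Real.sqrt (1 + t ^ 2) - t := rfl
  constructor
  · have h1 : t ≤ Real.sqrt (1 + t ^ 2) := by
      have := Real.sqrt_le_sqrt (show t ^ 2 ≤ 1 + t ^ 2 by linarith)
      rwa [Real.sqrt_sq ht] at this
    rw [hs]; linarith
  · have h2 : Real.sqrt (1 + t ^ 2) ≤ 1 + t := by
      have := Real.sqrt_le_sqrt (show 1 + t ^ 2 ≤ (1 + t) ^ 2 by nlinarith)
      rwa [Real.sqrt_sq (by linarith)] at this
    rw [hs]; linarith

/-- For `π : ℝ → ℝ`, `t ↦ √(1 + t²) − t`, the ring homomorphism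
`φ_π : C(ℝ, ℝ) → C(ℝ, ℝ)`, `f ↦ f ∘ π`, is not integral; in particular the identity
function is not integral over `C(ℝ, ℝ)` via `φ_π`. -/
theorem sqrtShift_not_integral :
    ¬(phiPi sqrtShift).IsIntegral ∧
      ¬(phiPi sqrtShift).IsIntegralElem (ContinuousMap.id ℝ) := by
  have key : ¬(phiPi sqrtShift).IsIntegralElem (ContinuousMap.id ℝ) := by
    rintro ⟨p, hm, hp⟩
    -- pointwise consequence: for each t, t is a root of the real polynomial
    -- obtained by mapping coefficients via evaluation at `sqrtShift t`.
    have h2 : ∀ t : ℝ, (p.map (evAt (sqrtShift t))).eval t = 0 := by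
      intro t
      have h1 := congrArg (evAt t) hp
      rw [Polynomial.hom_eval₂, map_zero] at h1
      have heq : (evAt t).comp (phiPi sqrtShift) = evAt (sqrtShift t) := by
        ext f
        rfl
      rw [heq] at h1
      have hid : evAt t (ContinuousMap.id ℝ) = t := rfl
      rw [hid] at h1
      rw [Polynomial.eval_map]
      exact h1
    -- uniform bounds on coefficients over [0,1]
    have hbd : ∀ i : ℕ, ∃ C : ℝ, 0 ≤ C ∧ ∀ y ∈ Set.Icc (0 : ℝ) 1, |p.coeff i y| ≤ C := by
      intro i
      obtain ⟨C, hC⟩ :=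
        isCompact_Icc.exists_bound_of_continuousOn (p.coeff i).continuous.continuousOn
      refine ⟨max C 0, le_max_right _ _, fun y hy => ?_⟩
      have := hC y hy
      rw [Real.norm_eq_abs] at this
      exact this.trans (le_max_left _ _)
    choose C hC0 hC using hbd
    set n := p.natDegree with hn
    set S : ℝ := ∑ i ∈ Finset.range n, C i with hSdef
    have hS0 : 0 ≤ S := Finset.sum_nonneg fun i _ => hC0 i
    set T : ℝ := 2 + S with hT
    have hT0 : 0 ≤ T := by positivity
    have hmem := sqrtShift_mem_Icc hT0
    -- apply the root bound
    have hmono : (p.map (evAt (sqrtShift T))).Monic := hm.map _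
    have hdeg : (p.map (evAt (sqrtShift T))).natDegree = n := hm.natDegree_map _
    have hroot := root_abs_le hmono (h2 T)
    rw [hdeg] at hroot
    have hcoef : ∀ i ∈ Finset.range n,
        |(p.map (evAt (sqrtShift T))).coeff i| ≤ C i := by
      intro i _
      rw [Polynomial.coeff_map]
      exact hC i (sqrtShift T) hmem
    have hsum : ∑ i ∈ Finset.range n, |(p.map (evAt (sqrtShift T))).coeff i| ≤ S :=
      Finset.sum_le_sum hcoef
    have : |T| ≤ 1 + S := hroot.trans (by linarith)
    rw [abs_of_nonneg hT0] at this
    linarith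
  exact ⟨fun h => key (h _), key⟩
end

section
/- Let M, N be compact metric spaces and let π : M → N be a continuous map that is locally injective, i.e. every point of M has an open neighbourhood on which π is injective. Then C(M,ℝ) is a finitely generated module over C(N,ℝ) via the ring homomorphism φ_π : C(N,ℝ) → C(M,ℝ), f ↦ f∘π. -/
open ContinuousMap

/-- Extension lemma: if `π` is injective on a closed set `K` of a compact metric space,
then any continuous function `g` on `M` admits a continuous `h` on `N` with
`h (π x) = g x` on `K`. -/
lemma exists_extension_of_injOn {M N : Type*} [MetricSpace M] [CompactSpace M]
    [MetricSpace N] (π : C(M, N)) (K : Set M) (hK : IsClosed K)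
    (hinj : Set.InjOn π K) (g : C(M, ℝ)) :
    ∃ h : C(N, ℝ), ∀ x ∈ K, h (π x) = g x := by
  haveI : CompactSpace K := isCompact_iff_compactSpace.mp hK.isCompact
  set m : K → ↥(π '' K) := fun x => ⟨π x, ⟨x.1, x.2, rfl⟩⟩ with hm
  have hmc : Continuous m := Continuous.subtype_mk
    (π.continuous.comp continuous_subtype_val) _
  have hb : Function.Bijective m := by
    constructor
    · intro a b hab
      exact Subtype.ext (hinj a.2 b.2 (congrArg Subtype.val hab))
    · rintro ⟨y, x, hx, rfl⟩
      exact ⟨⟨x, hx⟩, rfl⟩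
  set e : K ≃ ↥(π '' K) := Equiv.ofBijective m hb with he
  have hec : Continuous e := hmc
  let homeo : K ≃ₜ ↥(π '' K) := hec.homeoOfEquivCompactToT2
  have hclosed : IsClosed (π '' K) :=
    (hK.isCompact.image π.continuous).isClosed
  obtain ⟨h, hh⟩ := ContinuousMap.exists_restrict_eq hclosed
    ((g.restrict K).comp (homeo.symm : C(↥(π '' K), K)))
  refine ⟨h, fun x hx => ?_⟩
  have h1 := ContinuousMap.congr_fun hh (m ⟨x, hx⟩)
  have h2 : e.symm (m ⟨x, hx⟩) = ⟨x, hx⟩ := e.symm_apply_apply ⟨x, hx⟩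
  simpa [homeo, Continuous.homeoOfEquivCompactToT2, h2] using h1

/-- Let `M, N` be compact metric spaces and `π : M → N` a locally
injective continuous map. Then `C(M, ℝ)` is a finitely generated `C(N, ℝ)`-module via
`φ_π`. -/
theorem finite_of_locally_injective {M N : Type*} [MetricSpace M] [CompactSpace M]
    [MetricSpace N] [CompactSpace N] (π : C(M, N))
    (hloc : ∀ x : M, ∃ U : Set M, IsOpen U ∧ x ∈ U ∧ Set.InjOn π U) :
    (phiPi π).Finite := by
  choose V hVopen hVmem hVinj using hloc
  obtain ⟨t, ht⟩ := isCompact_univ.elim_finite_subcover V hVopen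
    (fun x _ => Set.mem_iUnion.mpr ⟨x, hVmem x⟩)
  have hcover : (Set.univ : Set M) ⊆ ⋃ i : t, V i := by
    intro x hx
    rcases Set.mem_iUnion₂.mp (ht hx) with ⟨i, hi, hxi⟩
    exact Set.mem_iUnion.mpr ⟨⟨i, hi⟩, hxi⟩
  obtain ⟨ρ, hρ⟩ := PartitionOfUnity.exists_isSubordinate isClosed_univ
    (fun i : t => V i) (fun i => hVopen i) hcover
  -- the square-root bump functions
  set s : t → C(M, ℝ) := fun i =>
    ⟨fun x => Real.sqrt (ρ i x), Real.continuous_sqrt.comp (ρ i).continuous⟩ with hs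
  letI : Algebra C(N, ℝ) C(M, ℝ) := (phiPi π).toAlgebra
  show Module.Finite C(N, ℝ) C(M, ℝ)
  refine ⟨Submodule.fg_def.mpr ⟨Set.range s, Set.finite_range s, ?_⟩⟩
  rw [eq_top_iff]
  rintro f -
  have hext : ∀ i : t, ∃ h : C(N, ℝ),
      ∀ x ∈ tsupport (ρ i), h (π x) = (s i * f) x := fun i =>
    exists_extension_of_injOn π (tsupport (ρ i)) (isClosed_tsupport _)
      ((hVinj i).mono (hρ i)) (s i * f)
  choose h hh using hext
  have hf : f = ∑ i, h i • s i := by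
    ext x
    have hsum : ∑ i, ρ i x = 1 := by
      rw [← finsum_eq_sum_of_fintype]
      exact ρ.sum_eq_one (Set.mem_univ x)
    have hterm : ∀ i : t, (h i • s i) x = ρ i x * f x := by
      intro i
      rw [Algebra.smul_def, RingHom.algebraMap_toAlgebra]
      by_cases hx : x ∈ tsupport (ρ i)
      · have h1 : (phiPi π) (h i) x = (s i * f) x := hh i x hx
        simp only [ContinuousMap.mul_apply, h1]
        show Real.sqrt (ρ i x) * f x * Real.sqrt (ρ i x) = ρ i x * f x
        rw [mul_comm (Real.sqrt (ρ i x) * f x)]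
        rw [← mul_assoc, Real.mul_self_sqrt (ρ.nonneg i x)]
      · have h0 : ρ i x = 0 := image_eq_zero_of_notMem_tsupport hx
        simp only [ContinuousMap.mul_apply, h0]
        show _ * Real.sqrt (ρ i x) = 0 * f x
        rw [h0, Real.sqrt_zero, mul_zero, zero_mul]
    rw [ContinuousMap.sum_apply]
    simp only [hterm]
    rw [← Finset.sum_mul, hsum, one_mul]
  rw [hf]
  exact Submodule.sum_mem _ fun i _ =>
    Submodule.smul_mem _ _ (Submodule.subset_span ⟨i, rfl⟩)
end

section
/- Let M be a topological space and let f₁,…,fₙ ∈ C(M,ℝ). Suppose that for every point x ∈ M the monic polynomial tⁿ + f₁(x)t^{n−1} + ⋯ + fₙ(x) ∈ ℝ[t] splits in ℝ[t] as a product of (not necessarily distinct) degree-one factors. Then there exist g₁,…,gₙ ∈ C(M,ℝ) such that for every x ∈ M one has tⁿ + Σ_{j=1}^n f_j(x)t^{n−j} = ∏_{j=1}^n (t − g_j(x)) in ℝ[t]. -/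
open Polynomial

namespace CRPSaux

/-- The coefficient map of a product of linear factors. -/
noncomputable def Phi (n : ℕ) (r : Fin n → ℝ) : Fin n → ℝ :=
  fun j => (∏ i : Fin n, (X - C (r i)) : ℝ[X]).coeff j

lemma continuous_coeff_prod {ι : Type*} (s : Finset ι) (k : ℕ) :
    Continuous (fun r : ι → ℝ => (∏ i ∈ s, (X - C (r i)) : ℝ[X]).coeff k) := by
  classical
  induction s using Finset.induction_on generalizing k with
  | empty => simpa using continuous_const
  | @insert a s ha ih =>
    have key : ∀ r : ι → ℝ, (∏ i ∈ insert a s, (X - C (r i)) : ℝ[X])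
        = (X - C (r a)) * ∏ i ∈ s, (X - C (r i)) := fun r => Finset.prod_insert ha
    cases k with
    | zero =>
      have : (fun r : ι → ℝ => (∏ i ∈ insert a s, (X - C (r i)) : ℝ[X]).coeff 0)
          = fun r => (-(r a)) * (∏ i ∈ s, (X - C (r i)) : ℝ[X]).coeff 0 := by
        funext r
        rw [key, mul_coeff_zero]
        simp
      rw [this]
      exact ((continuous_apply a).neg).mul (ih 0)
    | succ k =>
      have : (fun r : ι → ℝ => (∏ i ∈ insert a s, (X - C (r i)) : ℝ[X]).coeff (k+1))
          = fun r => (∏ i ∈ s, (X - C (r i)) : ℝ[X]).coeff k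
              - r a * (∏ i ∈ s, (X - C (r i)) : ℝ[X]).coeff (k+1) := by
        funext r
        rw [key, sub_mul, coeff_sub, coeff_X_mul, coeff_C_mul]
      rw [this]
      exact (ih k).sub ((continuous_apply a).mul (ih (k+1)))

lemma continuous_Phi (n : ℕ) : Continuous (Phi n) :=
  continuous_pi fun j => continuous_coeff_prod Finset.univ j

lemma monic_prod (n : ℕ) (r : Fin n → ℝ) :
    (∏ i : Fin n, (X - C (r i)) : ℝ[X]).Monic :=
  monic_prod_of_monic _ _ fun i _ => monic_X_sub_C _

lemma natDegree_prod' (n : ℕ) (r : Fin n → ℝ) :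
    (∏ i : Fin n, (X - C (r i)) : ℝ[X]).natDegree = n := by
  rw [Polynomial.natDegree_prod _ _ (fun i _ => X_sub_C_ne_zero (r i))]
  simp

lemma Phi_inj (n : ℕ) {r s : Fin n → ℝ} (hr : Monotone r) (hs : Monotone s)
    (h : Phi n r = Phi n s) : r = s := by
  have hpq : (∏ i : Fin n, (X - C (r i)) : ℝ[X]) = ∏ i : Fin n, (X - C (s i)) := by
    ext k
    rcases lt_trichotomy k n with hk | hk | hk
    · exact congrFun h ⟨k, hk⟩
    · subst hk
      have h1 := (monic_prod _ r).coeff_natDegree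
      have h2 := (monic_prod _ s).coeff_natDegree
      rw [natDegree_prod'] at h1 h2
      rw [h1, h2]
    · rw [coeff_eq_zero_of_natDegree_lt (by rw [natDegree_prod']; exact hk),
        coeff_eq_zero_of_natDegree_lt (by rw [natDegree_prod']; exact hk)]
  have hroots : (Finset.univ.val.map r) = (Finset.univ.val.map s) := by
    have hr' : (∏ i : Fin n, (X - C (r i)) : ℝ[X]).roots = Finset.univ.val.map r := by
      rw [Finset.prod_eq_multiset_prod,
        show (Multiset.map (fun i => X - C (r i)) Finset.univ.val)
            = Multiset.map (fun a => X - C a) (Multiset.map r Finset.univ.val) by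
          rw [Multiset.map_map]; rfl,
        roots_multiset_prod_X_sub_C]
    have hs' : (∏ i : Fin n, (X - C (s i)) : ℝ[X]).roots = Finset.univ.val.map s := by
      rw [Finset.prod_eq_multiset_prod,
        show (Multiset.map (fun i => X - C (s i)) Finset.univ.val)
            = Multiset.map (fun a => X - C a) (Multiset.map s Finset.univ.val) by
          rw [Multiset.map_map]; rfl,
        roots_multiset_prod_X_sub_C]
    rw [← hr', ← hs', hpq]
  rw [Fin.univ_val_map, Fin.univ_val_map] at hroots
  have hperm : (List.ofFn r).Perm (List.ofFn s) := Multiset.coe_eq_coe.mp hroots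
  exact List.ofFn_injective (List.Perm.eq_of_sortedLE hr.sortedLE_ofFn hs.sortedLE_ofFn hperm)

end CRPSaux

namespace CRPSaux

lemma isClosed_monotone (n : ℕ) : IsClosed {r : Fin n → ℝ | Monotone r} := by
  have hset : {r : Fin n → ℝ | Monotone r}
      = ⋂ (i : Fin n) (j : Fin n) (_ : i ≤ j), {r : Fin n → ℝ | r i ≤ r j} := by
    ext r
    simp only [Set.mem_setOf_eq, Set.mem_iInter]
    exact ⟨fun h i j hij => h hij, fun h i j hij => h i j hij⟩
  rw [hset]
  exact isClosed_iInter fun i => isClosed_iInter fun j => isClosed_iInter fun _ =>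
    isClosed_le (continuous_apply i) (continuous_apply j)

lemma isClosedEmbedding_PhiS (n : ℕ) :
    Topology.IsClosedEmbedding (fun r : {r : Fin n → ℝ // Monotone r} => Phi n r.1) := by
  have hcont : Continuous (fun r : {r : Fin n → ℝ // Monotone r} => Phi n r.1) :=
    (continuous_Phi n).comp continuous_subtype_val
  have hinj : Function.Injective (fun r : {r : Fin n → ℝ // Monotone r} => Phi n r.1) :=
    fun a b hab => Subtype.ext (Phi_inj n a.2 b.2 hab)
  have hproper : IsProperMap (fun r : {r : Fin n → ℝ // Monotone r} => Phi n r.1) := by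
    rw [isProperMap_iff_isCompact_preimage]
    refine ⟨hcont, fun K hK => ?_⟩
    obtain ⟨B, hB⟩ := hK.isBounded.subset_closedBall 0
    set B' : ℝ := max B 0 with hB'
    have hKB : K ⊆ Metric.closedBall 0 B' :=
      hB.trans (Metric.closedBall_subset_closedBall (le_max_left _ _))
    set A : Set (Fin n → ℝ) := {r | Monotone r} ∩ Phi n ⁻¹' K with hA
    have hAc : IsCompact A := by
      apply IsCompact.of_isClosed_subset (isCompact_closedBall (0 : Fin n → ℝ) (B' + 1))
        ((isClosed_monotone n).inter (hK.isClosed.preimage (continuous_Phi n)))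
      intro r hr
      rw [Metric.mem_closedBall, dist_zero_right]
      have hB'1 : (0:ℝ) ≤ B' + 1 := by positivity
      rw [pi_norm_le_iff_of_nonneg hB'1]
      intro i
      have hroot : IsRoot (∏ j : Fin n, (X - C (r j)) : ℝ[X]) (r i) := by
        rw [IsRoot, eval_prod]
        exact Finset.prod_eq_zero (Finset.mem_univ i) (by simp)
      have hlt := hroot.norm_lt_cauchyBound (monic_prod n r).ne_zero
      have hcb : cauchyBound (∏ j : Fin n, (X - C (r j)) : ℝ[X])
          = (Finset.range n).sup
              (fun j => ‖(∏ i : Fin n, (X - C (r i)) : ℝ[X]).coeff j‖₊) + 1 := by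
        rw [cauchyBound, (monic_prod n r).leadingCoeff, nnnorm_one, div_one, natDegree_prod']
      have hsup : (Finset.range n).sup
          (fun j => ‖(∏ i : Fin n, (X - C (r i)) : ℝ[X]).coeff j‖₊) ≤ ‖Phi n r‖₊ := by
        refine Finset.sup_le fun j hj => ?_
        have hjn : (∏ i : Fin n, (X - C (r i)) : ℝ[X]).coeff j
            = Phi n r ⟨j, Finset.mem_range.mp hj⟩ := rfl
        rw [hjn]
        exact nnnorm_le_pi_nnnorm (Phi n r) _
      have h1 : ‖r i‖₊ < ‖Phi n r‖₊ + 1 :=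
        hlt.trans_le (by rw [hcb]; exact add_le_add_left hsup 1)
      have h2 : ‖r i‖ ≤ ‖Phi n r‖ + 1 := by exact_mod_cast h1.le
      have h3 : ‖Phi n r‖ ≤ B' := by
        have := hKB hr.2
        rwa [Metric.mem_closedBall, dist_zero_right] at this
      linarith
    rw [Subtype.isCompact_iff]
    have himg : Subtype.val '' ((fun r : {r : Fin n → ℝ // Monotone r} => Phi n r.1) ⁻¹' K)
        = A := by
      ext r
      constructor
      · rintro ⟨x, hx, rfl⟩; exact ⟨x.2, hx⟩
      · rintro ⟨h1, h2⟩; exact ⟨⟨r, h1⟩, h2, rfl⟩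
    rw [himg]
    exact hAc
  exact .of_continuous_injective_isClosedMap hcont hinj hproper.isClosedMap

lemma coeff_P (n : ℕ) (c : Fin n → ℝ) (m : Fin n) :
    (X ^ n + ∑ j : Fin n, C (c j) * X ^ (n - 1 - (j : ℕ)) : ℝ[X]).coeff m = c (Fin.rev m) := by
  rw [coeff_add, coeff_X_pow, if_neg (by omega : ¬ ((m:ℕ) = n)), finset_sum_coeff]
  have hterm : ∀ j : Fin n, (C (c j) * X ^ (n - 1 - (j:ℕ)) : ℝ[X]).coeff m
      = if j = Fin.rev m then c j else 0 := by
    intro j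
    rw [coeff_C_mul, coeff_X_pow]
    by_cases h : j = Fin.rev m
    · subst h
      rw [if_pos, if_pos rfl, mul_one]
      have := Fin.val_rev m
      omega
    · rw [if_neg, mul_zero, if_neg h]
      intro hc
      apply h
      have h1 := Fin.val_rev m
      have h2 := m.isLt
      have h3 := j.isLt
      exact Fin.ext (by omega)
  rw [Finset.sum_congr rfl fun j _ => hterm j, Finset.sum_ite_eq' Finset.univ (Fin.rev m) c,
    if_pos (Finset.mem_univ _), zero_add]

end CRPSaux


open CRPSaux in
/-- Let `M` be a topological space and `f₁, …, fₙ ∈ C(M, ℝ)`.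
If for every `x ∈ M` the monic polynomial `tⁿ + f₁(x) t^{n-1} + ⋯ + fₙ(x)` splits over
`ℝ` into degree-one factors, then there are `g₁, …, gₙ ∈ C(M, ℝ)` with
`tⁿ + ∑ⱼ fⱼ(x) t^{n-j} = ∏ⱼ (t − gⱼ(x))` for all `x ∈ M`. -/
theorem continuous_roots_of_pointwise_split {M : Type*} [TopologicalSpace M]
    (n : ℕ) (f : Fin n → C(M, ℝ))
    (hsplit : ∀ x : M, ∃ r : Fin n → ℝ,
      (X ^ n + ∑ j : Fin n, C (f j x) * X ^ (n - 1 - (j : ℕ)) : ℝ[X]) =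
        ∏ j : Fin n, (X - C (r j))) :
    ∃ g : Fin n → C(M, ℝ), ∀ x : M,
      (X ^ n + ∑ j : Fin n, C (f j x) * X ^ (n - 1 - (j : ℕ)) : ℝ[X]) =
        ∏ j : Fin n, (X - C (g j x)) := by
  classical
  have hex : ∀ x : M, ∃ s : Fin n → ℝ, Monotone s ∧
      (X ^ n + ∑ j : Fin n, C (f j x) * X ^ (n - 1 - (j : ℕ)) : ℝ[X]) =
        ∏ j : Fin n, (X - C (s j)) := by
    intro x
    obtain ⟨r, hr⟩ := hsplit x
    refine ⟨r ∘ Tuple.sort r, Tuple.monotone_sort r, ?_⟩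
    rw [hr]
    exact (Equiv.prod_comp (Tuple.sort r) fun i => (X - C (r i) : ℝ[X])).symm
  choose s hmono heq using hex
  set σ : M → {r : Fin n → ℝ // Monotone r} := fun x => ⟨s x, hmono x⟩ with hσ
  have hcontσ : Continuous σ := by
    rw [(isClosedEmbedding_PhiS n).isEmbedding.continuous_iff]
    have hcomp : (fun r : {r : Fin n → ℝ // Monotone r} => Phi n r.1) ∘ σ
        = fun x => fun m : Fin n => f (Fin.rev m) x := by
      funext x
      funext m
      show (∏ i : Fin n, (X - C (s x i)) : ℝ[X]).coeff m = _
      rw [← heq x, coeff_P]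
    rw [hcomp]
    exact continuous_pi fun m => (f (Fin.rev m)).continuous
  exact ⟨fun j => ⟨fun x => s x j,
    (continuous_apply j).comp (continuous_subtype_val.comp hcontσ)⟩, fun x => heq x⟩
end

section
/- Let π : M → N be a continuous surjective map between topological spaces and let g ∈ C(M,ℝ) be integral over C(N,ℝ) via φ_π, i.e. gⁿ + (f₁∘π)g^{n−1} + ⋯ + (fₙ∘π) = 0 for some n ≥ 1 and f₁,…,fₙ ∈ C(N,ℝ). Then there exist k ≥ 1 and h₁,…,h_k ∈ C(N,ℝ) such that ∏_{j=1}^k (g − h_j∘π) = 0 in C(M,ℝ). -/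
open Polynomial Finset

namespace Stmt15

/-! ### Order-statistic machinery on `Fin n → ℝ` -/

/-- Subsets of `Fin n` of cardinality `k`. -/
def kSets (n k : ℕ) : Finset (Finset (Fin n)) := Finset.univ.filter fun S => S.card = k

lemma card_of_mem_kSets {n k : ℕ} {S : Finset (Fin n)} (h : S ∈ kSets n k) : S.card = k :=
  (Finset.mem_filter.mp h).2

lemma kSets_nonempty {n k : ℕ} (h : k ≤ n) : (kSets n k).Nonempty := by
  obtain ⟨t, -, ht⟩ := Finset.exists_subset_card_eq
    (show k ≤ (Finset.univ : Finset (Fin n)).card by simpa using h)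
  exact ⟨t, Finset.mem_filter.mpr ⟨Finset.mem_univ _, ht⟩⟩

lemma mem_kSets {n k : ℕ} {S : Finset (Fin n)} (h : S.card = k) : S ∈ kSets n k :=
  Finset.mem_filter.mpr ⟨Finset.mem_univ _, h⟩

lemma nonempty_of_mem_kSets {n k : ℕ} (hk : 0 < k) {S : Finset (Fin n)}
    (h : S ∈ kSets n k) : S.Nonempty :=
  Finset.card_pos.mp (by rw [card_of_mem_kSets h]; exact hk)

/-- `sVal j x` is `min` over subsets `S` of cardinality `j+1` of `max_{i ∈ S} x i`;
this is the `(j+1)`-st smallest entry of `x`. -/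
noncomputable def sVal {n : ℕ} (j : Fin n) (x : Fin n → ℝ) : ℝ :=
  (kSets n ((j : ℕ) + 1)).attach.inf'
    (Finset.attach_nonempty_iff.mpr (kSets_nonempty j.isLt))
    (fun S => S.1.sup' (nonempty_of_mem_kSets (Nat.succ_pos _) S.2) x)

lemma continuous_sVal {n : ℕ} (j : Fin n) : Continuous (sVal j) := by
  rw [continuous_iff_continuousAt]
  intro x
  unfold sVal ContinuousAt
  apply Filter.Tendsto.finset_inf'_nhds_apply
  intro S _
  apply Filter.Tendsto.finset_sup'_nhds_apply
  intro i _
  exact (continuous_apply i).continuousAt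

lemma sVal_eq_sInf {n : ℕ} (j : Fin n) (x : Fin n → ℝ) :
    sVal j x = sInf {t : ℝ | (j : ℕ) + 1 ≤ (Finset.univ.filter fun i => x i ≤ t).card} := by
  classical
  have hne : (Finset.univ : Finset (Fin n)).Nonempty := ⟨j, Finset.mem_univ j⟩
  have hSne : {t : ℝ | (j : ℕ) + 1 ≤ (Finset.univ.filter fun i => x i ≤ t).card}.Nonempty := by
    refine ⟨Finset.univ.sup' hne x, ?_⟩
    have : (Finset.univ.filter fun i => x i ≤ Finset.univ.sup' hne x) = Finset.univ := by
      apply Finset.filter_true_of_mem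
      intro i _
      exact Finset.le_sup' x (Finset.mem_univ i)
    simp only [Set.mem_setOf_eq, this, Finset.card_univ, Fintype.card_fin]
    exact j.isLt
  apply le_antisymm
  · apply le_csInf hSne
    intro t ht
    simp only [Set.mem_setOf_eq] at ht
    obtain ⟨S, hSsub, hScard⟩ := Finset.exists_subset_card_eq ht
    have hmem : (⟨S, mem_kSets hScard⟩ : {T // T ∈ kSets n ((j : ℕ) + 1)}) ∈
        (kSets n ((j : ℕ) + 1)).attach := Finset.mem_attach _ _
    refine le_trans (Finset.inf'_le _ hmem) ?_
    apply Finset.sup'_le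
    intro i hi
    exact (Finset.mem_filter.mp (hSsub hi)).2
  · have hbdd : BddBelow {t : ℝ | (j : ℕ) + 1 ≤ (Finset.univ.filter fun i => x i ≤ t).card} := by
      refine ⟨Finset.univ.inf' hne x, ?_⟩
      intro t ht
      simp only [Set.mem_setOf_eq] at ht
      have : (Finset.univ.filter fun i => x i ≤ t).Nonempty :=
        Finset.card_pos.mp (by omega)
      obtain ⟨i, hi⟩ := this
      exact le_trans (Finset.inf'_le x (Finset.mem_univ i)) (Finset.mem_filter.mp hi).2
    apply csInf_le hbdd
    obtain ⟨S, _, hval⟩ := Finset.exists_mem_eq_inf'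
      (Finset.attach_nonempty_iff.mpr (kSets_nonempty j.isLt))
      (fun S : {T // T ∈ kSets n ((j : ℕ) + 1)} =>
        S.1.sup' (nonempty_of_mem_kSets (Nat.succ_pos _) S.2) x)
    show ((j : ℕ) + 1) ≤ _
    rw [show sVal j x = S.1.sup' (nonempty_of_mem_kSets (Nat.succ_pos _) S.2) x from hval]
    calc (j : ℕ) + 1 = S.1.card := (card_of_mem_kSets S.2).symm
      _ ≤ (Finset.univ.filter fun i =>
            x i ≤ S.1.sup' (nonempty_of_mem_kSets (Nat.succ_pos _) S.2) x).card := by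
          apply Finset.card_le_card
          intro i hi
          exact Finset.mem_filter.mpr ⟨Finset.mem_univ _, Finset.le_sup' x hi⟩

lemma sVal_congr {n : ℕ} {x w : Fin n → ℝ}
    (h : Multiset.map x Finset.univ.val = Multiset.map w Finset.univ.val) (j : Fin n) :
    sVal j x = sVal j w := by
  classical
  rw [sVal_eq_sInf, sVal_eq_sInf]
  have key : ∀ t : ℝ, (Finset.univ.filter fun i => x i ≤ t).card =
      (Finset.univ.filter fun i => w i ≤ t).card := by
    intro t
    have := congrArg (Multiset.countP (fun r : ℝ => r ≤ t)) h
    rwa [Multiset.countP_map, Multiset.countP_map, ← Finset.filter_val, ← Finset.filter_val,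
      ← Finset.card_def, ← Finset.card_def] at this
  congr 1
  ext t
  simp only [Set.mem_setOf_eq, key t]

lemma exists_sVal_eq {n : ℕ} (x : Fin n → ℝ) (i : Fin n) : ∃ j : Fin n, sVal j x = x i := by
  classical
  set c := (Finset.univ.filter fun i' => x i' ≤ x i).card with hc
  have hci : i ∈ Finset.univ.filter fun i' => x i' ≤ x i :=
    Finset.mem_filter.mpr ⟨Finset.mem_univ _, le_refl _⟩
  have hc1 : 1 ≤ c := Finset.card_pos.mpr ⟨i, hci⟩
  have hcn : c ≤ n := le_trans (Finset.card_filter_le _ _) (by simp)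
  refine ⟨⟨c - 1, by omega⟩, ?_⟩
  rw [sVal_eq_sInf]
  have hj1 : ((⟨c - 1, by omega⟩ : Fin n) : ℕ) + 1 = c := by simp; omega
  rw [hj1]
  apply le_antisymm
  · apply csInf_le
    · refine ⟨Finset.univ.inf' ⟨i, Finset.mem_univ i⟩ x, ?_⟩
      intro t ht
      simp only [Set.mem_setOf_eq] at ht
      have : (Finset.univ.filter fun i' => x i' ≤ t).Nonempty :=
        Finset.card_pos.mp (by omega)
      obtain ⟨i', hi'⟩ := this
      exact le_trans (Finset.inf'_le x (Finset.mem_univ i')) (Finset.mem_filter.mp hi').2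
    · exact le_refl c
  · apply le_csInf ⟨x i, le_refl c⟩
    intro t ht
    simp only [Set.mem_setOf_eq] at ht
    by_contra hlt
    push_neg at hlt
    have hsub : (Finset.univ.filter fun i' => x i' ≤ t) ⊆
        (Finset.univ.filter fun i' => x i' ≤ x i).erase i := by
      intro i' hi'
      have hxi' : x i' ≤ t := (Finset.mem_filter.mp hi').2
      refine Finset.mem_erase.mpr ⟨?_, Finset.mem_filter.mpr ⟨Finset.mem_univ _, le_of_lt (lt_of_le_of_lt hxi' hlt)⟩⟩
      rintro rfl
      exact absurd hxi' (not_le.mpr hlt)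
    have := Finset.card_le_card hsub
    rw [Finset.card_erase_of_mem hci] at this
    omega



/-- The monic polynomial with prescribed roots `z`. -/
noncomputable def Pz {n : ℕ} (z : Fin n → ℂ) : Polynomial ℂ := ∏ j : Fin n, (X - C (z j))

/-- The roots-to-coefficients map `Φ`. -/
noncomputable def Phi (n : ℕ) (z : Fin n → ℂ) : Fin n → ℂ := fun i => (Pz z).coeff i

/-- The monic polynomial with prescribed (lower) coefficients `a`. -/
noncomputable def Qa (n : ℕ) (a : Fin n → ℂ) : Polynomial ℂ :=
  X ^ n + ∑ i : Fin n, C (a i) * X ^ (i : ℕ)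

lemma Pz_monic {n : ℕ} (z : Fin n → ℂ) : (Pz z).Monic :=
  monic_prod_of_monic _ _ fun j _ => monic_X_sub_C (z j)

lemma Pz_natDegree {n : ℕ} (z : Fin n → ℂ) : (Pz z).natDegree = n := by
  rw [Pz, natDegree_prod_of_monic _ _ fun j _ => monic_X_sub_C (z j)]
  simp [natDegree_X_sub_C]

lemma Pz_eq_multiset_prod {n : ℕ} (z : Fin n → ℂ) :
    Pz z = ((Finset.univ.val.map z).map fun a => X - C a).prod := by
  rw [Pz, Finset.prod, Multiset.map_map]
  rfl

lemma Pz_roots {n : ℕ} (z : Fin n → ℂ) : (Pz z).roots = Multiset.map z Finset.univ.val := by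
  rw [Pz_eq_multiset_prod, roots_multiset_prod_X_sub_C]

lemma Qa_degree_sum_lt {n : ℕ} (hn : 0 < n) (a : Fin n → ℂ) :
    (∑ i : Fin n, C (a i) * X ^ (i : ℕ) : Polynomial ℂ).degree < (n : ℕ) := by
  apply lt_of_le_of_lt (degree_sum_le _ _)
  rw [Finset.sup_lt_iff (by exact_mod_cast WithBot.bot_lt_coe (n : ℕ))]
  intro i _
  apply lt_of_le_of_lt (degree_C_mul_X_pow_le _ _)
  exact_mod_cast i.isLt

lemma Qa_monic {n : ℕ} (hn : 0 < n) (a : Fin n → ℂ) : (Qa n a).Monic :=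
  monic_X_pow_add (Qa_degree_sum_lt hn a)

lemma Qa_natDegree {n : ℕ} (hn : 0 < n) (a : Fin n → ℂ) : (Qa n a).natDegree = n := by
  have hdeg : (Qa n a).degree = (n : ℕ) := by
    rw [Qa, degree_add_eq_left_of_degree_lt]
    · exact degree_X_pow n
    · rw [degree_X_pow]; exact Qa_degree_sum_lt hn a
  exact natDegree_eq_of_degree_eq_some hdeg

lemma Qa_coeff_lt {n : ℕ} (a : Fin n → ℂ) {i : ℕ} (h : i < n) :
    (Qa n a).coeff i = a ⟨i, h⟩ := by
  classical
  rw [Qa, coeff_add, coeff_X_pow, if_neg (by omega), finset_sum_coeff]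
  simp only [coeff_C_mul_X_pow]
  rw [Finset.sum_eq_single (⟨i, h⟩ : Fin n)]
  · simp
  · intro j _ hj
    rw [if_neg]
    intro hij
    exact hj (Fin.ext hij.symm)
  · intro habs
    exact absurd (Finset.mem_univ _) habs

/-- A monic polynomial of `natDegree n` is determined by its lower coefficients. -/
lemma eq_Qa {n : ℕ} {q : Polynomial ℂ} (hm : q.Monic) (hd : q.natDegree = n) :
    q = Qa n fun i => q.coeff i := by
  classical
  ext k
  rcases lt_trichotomy k n with hk | hk | hk
  · rw [Qa_coeff_lt _ hk]
  · subst hk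
    rw [show (Qa k fun i : Fin k => q.coeff i).coeff k =
        (Qa k fun i : Fin k => q.coeff i).leadingCoeff by
      rw [leadingCoeff]
      congr 1
      rcases Nat.eq_zero_or_pos k with hk0 | hk0
      · subst hk0
        simp [Qa]
      · exact (Qa_natDegree hk0 _).symm]
    rcases Nat.eq_zero_or_pos k with hk0 | hk0
    · subst hk0
      have : q = 1 := hm.natDegree_eq_zero.mp hd
      subst this
      simp [Qa]
    · rw [(Qa_monic hk0 _).leadingCoeff]
      rw [show k = q.natDegree from hd.symm]
      exact hm.coeff_natDegree
  · rw [coeff_eq_zero_of_natDegree_lt (by omega),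
      coeff_eq_zero_of_natDegree_lt]
    rcases Nat.eq_zero_or_pos n with hk0 | hk0
    · subst hk0
      simp only [Qa]
      simp [natDegree_one]
      omega
    · rw [Qa_natDegree hk0]; omega

lemma Pz_eq_Qa {n : ℕ} {z : Fin n → ℂ} {a : Fin n → ℂ} (h : Phi n z = a) :
    Pz z = Qa n a := by
  have h1 : Pz z = Qa n fun i => (Pz z).coeff i := eq_Qa (Pz_monic z) (Pz_natDegree z)
  rw [h1]
  exact congrArg (Qa n) h

lemma Phi_surjective {n : ℕ} (hn : 0 < n) : Function.Surjective (Phi n) := by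
  intro a
  set q := Qa n a with hq
  have hm : q.Monic := Qa_monic hn a
  have hs : q.Splits := IsAlgClosed.splits q
  have hcard : Multiset.card q.roots = n := by
    rw [splits_iff_card_roots.mp hs, Qa_natDegree hn a]
  set l := q.roots.toList with hl'
  have hl : l.length = n := by rw [hl', Multiset.length_toList, hcard]
  refine ⟨fun i => l.get (Fin.cast hl.symm i), ?_⟩
  set z : Fin n → ℂ := fun i => l.get (Fin.cast hl.symm i) with hz
  have hofn : List.ofFn z = l := by
    apply List.ext_get (by simp [hl])
    intro k h1 h2
    simp [hz, List.get_ofFn]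
  have huniv : (Finset.univ.val : Multiset (Fin n)) = ↑(List.finRange n) := rfl
  have hms : Multiset.map z Finset.univ.val = q.roots := by
    rw [huniv]
    rw [show Multiset.map z ↑(List.finRange n) = ↑(List.map z (List.finRange n)) from rfl]
    rw [← List.ofFn_eq_map, hofn, hl', Multiset.coe_toList]
  have hPz : Pz z = q := by
    rw [Pz_eq_multiset_prod, hms]
    exact (hs.eq_prod_roots_of_monic hm).symm
  funext i
  show (Pz z).coeff i = a i
  rw [hPz, hq, Qa_coeff_lt a i.isLt]

lemma continuous_coeff_prod {n : ℕ} (s : Finset (Fin n)) (i : ℕ) :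
    Continuous fun z : Fin n → ℂ => (∏ j ∈ s, (X - C (z j))).coeff i := by
  classical
  induction s using Finset.induction generalizing i with
  | empty => simpa using continuous_const
  | @insert a s ha ih =>
    have hrw : ∀ z : Fin n → ℂ,
        (∏ j ∈ insert a s, (X - C (z j))).coeff i =
          (X * ∏ j ∈ s, (X - C (z j))).coeff i - z a * (∏ j ∈ s, (X - C (z j))).coeff i := by
      intro z
      rw [Finset.prod_insert ha, sub_mul, coeff_sub, coeff_C_mul]
    simp_rw [hrw]
    cases i with
    | zero =>
      simp_rw [mul_coeff_zero, coeff_X_zero, zero_mul]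
      exact continuous_const.sub ((continuous_apply a).mul (ih 0))
    | succ i =>
      simp_rw [coeff_X_mul]
      exact (ih i).sub ((continuous_apply a).mul (ih (i + 1)))

lemma Phi_continuous {n : ℕ} : Continuous (Phi n) :=
  continuous_pi fun i => continuous_coeff_prod Finset.univ (i : ℕ)


lemma Phi_isProperMap {n : ℕ} : IsProperMap (Phi n) := by
  rw [isProperMap_iff_isCompact_preimage]
  refine ⟨Phi_continuous, fun K hK => ?_⟩
  rw [Metric.isCompact_iff_isClosed_bounded]
  refine ⟨hK.isClosed.preimage Phi_continuous, ?_⟩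
  obtain ⟨C, hC⟩ := isBounded_iff_forall_norm_le.mp hK.isBounded
  rw [isBounded_iff_forall_norm_le]
  refine ⟨max C 0 + 1, fun z hz => ?_⟩
  rw [pi_norm_le_iff_of_nonneg (by positivity)]
  intro i
  have hroot : (Pz z).IsRoot (z i) := by
    rw [IsRoot.def, Pz, eval_prod]
    exact Finset.prod_eq_zero (Finset.mem_univ i) (by simp)
  have hb := hroot.norm_lt_cauchyBound (Pz_monic z).ne_zero
  have hcb : cauchyBound (Pz z) ≤ Real.toNNReal C + 1 := by
    unfold cauchyBound
    rw [Monic.leadingCoeff (Pz_monic z), nnnorm_one, div_one]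
    apply add_le_add_left
    apply Finset.sup_le
    intro k hk
    rw [Finset.mem_range, Pz_natDegree] at hk
    rw [← NNReal.coe_le_coe, coe_nnnorm, Real.coe_toNNReal']
    exact le_max_of_le_left
      (le_trans (norm_le_pi_norm (Phi n z) ⟨k, hk⟩) (hC _ hz))
  have h2 := le_of_lt (lt_of_lt_of_le hb hcb)
  rw [← NNReal.coe_le_coe] at h2
  simp only [coe_nnnorm, NNReal.coe_add, Real.coe_toNNReal', NNReal.coe_one] at h2
  exact h2


/-! ### The continuous branch functions -/

noncomputable def rootFun {n : ℕ} (hn : 0 < n) : (Fin n → ℂ) → (Fin n → ℂ) :=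
  Function.surjInv (Phi_surjective hn)

lemma Phi_rootFun {n : ℕ} (hn : 0 < n) (a : Fin n → ℂ) : Phi n (rootFun hn a) = a :=
  Function.surjInv_eq _ a

lemma fiber_multiset {n : ℕ} {z w : Fin n → ℂ} (h : Phi n z = Phi n w) :
    Multiset.map z Finset.univ.val = Multiset.map w Finset.univ.val := by
  have h1 : Pz z = Qa n (Phi n z) := Pz_eq_Qa rfl
  have h2 : Pz w = Qa n (Phi n z) := Pz_eq_Qa h.symm
  rw [← Pz_roots, ← Pz_roots, h1, h2]

noncomputable def Hbar {n : ℕ} (hn : 0 < n) (j : Fin n) (a : Fin n → ℂ) : ℝ :=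
  sVal j fun i => (rootFun hn a i).re

lemma Hbar_comp {n : ℕ} (hn : 0 < n) (j : Fin n) (z : Fin n → ℂ) :
    Hbar hn j (Phi n z) = sVal j fun i => (z i).re := by
  apply sVal_congr
  have hfib := fiber_multiset (Phi_rootFun hn (Phi n z))
  calc Multiset.map (fun i => (rootFun hn (Phi n z) i).re) Finset.univ.val
      = Multiset.map Complex.re (Multiset.map (rootFun hn (Phi n z)) Finset.univ.val) := by
        rw [Multiset.map_map]; rfl
    _ = Multiset.map Complex.re (Multiset.map z Finset.univ.val) := by rw [hfib]
    _ = Multiset.map (fun i => (z i).re) Finset.univ.val := by rw [Multiset.map_map]; rfl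

lemma Hbar_continuous {n : ℕ} (hn : 0 < n) (j : Fin n) : Continuous (Hbar hn j) := by
  have hq : Topology.IsQuotientMap (Phi n) :=
    (Phi_isProperMap.isClosedMap).isQuotientMap Phi_continuous (Phi_surjective hn)
  rw [hq.continuous_iff]
  have heq : (Hbar hn j) ∘ (Phi n) = fun z => sVal j fun i => (z i).re :=
    funext (Hbar_comp hn j)
  rw [heq]
  exact (continuous_sVal j).comp
    (continuous_pi fun i => Complex.continuous_re.comp (continuous_apply i))

end Stmt15

open ContinuousMap

/-- Let `π : M → N` be a continuous surjection of topological spaces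
and `g ∈ C(M, ℝ)` integral over `C(N, ℝ)` via `φ_π`. Then there exist `k ≥ 1` and
`h₁, …, h_k ∈ C(N, ℝ)` with `∏ⱼ (g − hⱼ ∘ π) = 0` in `C(M, ℝ)`. -/
theorem integral_elem_product_relation {M N : Type*} [TopologicalSpace M]
    [TopologicalSpace N] (π : C(M, N)) (hsurj : Function.Surjective π)
    (g : C(M, ℝ)) (hint : (phiPi π).IsIntegralElem g) :
    ∃ k : ℕ, 1 ≤ k ∧ ∃ h : Fin k → C(N, ℝ), ∏ j, (g - phiPi π (h j)) = 0 := by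
  classical
  obtain ⟨p, hm, hev⟩ := hint
  rcases Nat.eq_zero_or_pos p.natDegree with h0 | hpos
  · -- degenerate case: `p = 1`, so `C(M, ℝ)` is the zero ring
    have hp1 : p = 1 := hm.natDegree_eq_zero.mp h0
    subst hp1
    rw [Polynomial.eval₂_one] at hev
    have hsub : Subsingleton C(M, ℝ) := subsingleton_of_zero_eq_one hev.symm
    exact ⟨1, le_refl 1, fun _ => 0, Subsingleton.elim _ _⟩
  · set n := p.natDegree with hn
    -- the (complexified) coefficient functions
    set A : N → Fin n → ℂ := fun y i => ((p.coeff i) y : ℂ) with hA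
    have hAcont : Continuous A :=
      continuous_pi fun i => Complex.continuous_ofReal.comp (p.coeff i).continuous
    set h : Fin n → C(N, ℝ) :=
      fun j => ⟨fun y => Stmt15.Hbar hpos j (A y),
        (Stmt15.Hbar_continuous hpos j).comp hAcont⟩ with hh
    refine ⟨n, hpos, h, ?_⟩
    ext m
    rw [ContinuousMap.prod_apply, ContinuousMap.zero_apply]
    set y := π m with hy
    -- evaluation ring homomorphisms
    set EM : C(M, ℝ) →+* ℝ := (Pi.evalRingHom (fun _ : M => ℝ) m).comp
      (ContinuousMap.coeFnRingHom) with hEM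
    set EN : C(N, ℝ) →+* ℝ := (Pi.evalRingHom (fun _ : N => ℝ) y).comp
      (ContinuousMap.coeFnRingHom) with hEN
    have hcomp : EM.comp (phiPi π) = EN := by
      apply RingHom.ext
      intro f
      rfl
    -- evaluate the integrality relation at `m`, then complexify
    have hev1 : Polynomial.eval₂ EN (g m) p = 0 := by
      have := congrArg EM hev
      rw [Polynomial.hom_eval₂, hcomp, map_zero] at this
      exact this
    have hev2 : Polynomial.eval₂ (Complex.ofRealHom.comp EN) ((g m : ℝ) : ℂ) p = 0 := by
      have := congrArg Complex.ofRealHom hev1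
      rw [Polynomial.hom_eval₂, map_zero] at this
      exact this
    set q : Polynomial ℂ := p.map (Complex.ofRealHom.comp EN) with hq
    have hqeval : q.eval ((g m : ℝ) : ℂ) = 0 := by
      rw [hq, ← Polynomial.eval₂_eq_eval_map]
      exact hev2
    have hqm : q.Monic := hm.map _
    have hqd : q.natDegree = n := by rw [hq, Polynomial.Monic.natDegree_map hm]
    have hqQa : q = Stmt15.Qa n (A y) := by
      have h1 := Stmt15.eq_Qa hqm hqd
      rw [h1]
      congr 1
      funext i
      rw [hq, Polynomial.coeff_map]
      rfl
    set z : Fin n → ℂ := Stmt15.rootFun hpos (A y) with hz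
    have hPzq : Stmt15.Pz z = q := by
      rw [Stmt15.Pz_eq_Qa (Stmt15.Phi_rootFun hpos (A y)), hqQa]
    have hprod : ∏ i : Fin n, (((g m : ℝ) : ℂ) - z i) = 0 := by
      have := hqeval
      rw [← hPzq, Stmt15.Pz, Polynomial.eval_prod] at this
      simpa using this
    obtain ⟨i, -, hi⟩ := Finset.prod_eq_zero_iff.mp hprod
    have hzi : z i = ((g m : ℝ) : ℂ) := by
      have := sub_eq_zero.mp hi
      exact this.symm
    have hre : (z i).re = g m := by rw [hzi, Complex.ofReal_re]
    obtain ⟨j, hj⟩ := Stmt15.exists_sVal_eq (fun i => (z i).re) i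
    apply Finset.prod_eq_zero (Finset.mem_univ j)
    have hhj : (h j) y = g m := by
      show Stmt15.Hbar hpos j (A y) = g m
      rw [show Stmt15.Hbar hpos j (A y) = Stmt15.sVal j fun i => (z i).re from rfl, hj, hre]
    rw [ContinuousMap.sub_apply]
    have hphi : (phiPi π (h j)) m = (h j) y := rfl
    rw [hphi, hhj, sub_self]
end

section
/- Let M and N be metric spaces and π : M → N a continuous, closed and surjective map. Let f₁,…,f_k ∈ C(M,ℝ) be such that each f_i is integral over C(N,ℝ) via φ_π, and suppose the subring of C(M,ℝ) generated by the image of φ_π together with f₁,…,f_k separates the points of M. Then there exists a finite cover M = M₁ ∪ ⋯ ∪ M_r by closed subsets such that each restriction π|_{M_i} is injective; in particular, every element of C(M,ℝ) is integral over C(N,ℝ) via φ_π. -/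
open ContinuousMap

open Polynomial Filter Topology


/-- Evaluation ring homomorphism on `C(X, ℝ)`. -/
def evRH {X : Type*} [TopologicalSpace X] (x : X) : C(X, ℝ) →+* ℝ where
  toFun g := g x
  map_one' := rfl
  map_mul' _ _ := rfl
  map_zero' := rfl
  map_add' _ _ := rfl

/-- Coefficients of `∏ (X - Polynomial.C (z j))` depend continuously on `z`. -/
lemma continuous_coeff_prod_X_sub_C {ι : Type*} (s : Finset ι) :
    ∀ l : ℕ, Continuous fun z : ι → ℂ => (∏ j ∈ s, (X - Polynomial.C (z j))).coeff l := by
  classical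
  induction s using Finset.induction with
  | empty =>
      intro l
      simp only [Finset.prod_empty, Polynomial.coeff_one]
      exact continuous_const
  | @insert a s ha ih =>
      intro l
      have hrw : ∀ z : ι → ℂ, (∏ j ∈ insert a s, (X - Polynomial.C (z j))).coeff l
          = (if l = 0 then 0 else (∏ j ∈ s, (X - Polynomial.C (z j))).coeff (l - 1))
            - z a * (∏ j ∈ s, (X - Polynomial.C (z j))).coeff l := by
        intro z
        rw [Finset.prod_insert ha, sub_mul, coeff_sub, Polynomial.C_mul', coeff_smul]
        cases l with
        | zero => simp
        | succ l => simp [coeff_X_mul]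
      simp only [hrw]
      cases l with
      | zero =>
          simp only [if_pos rfl]
          exact continuous_const.sub ((continuous_apply a).mul (ih 0))
      | succ l =>
          simp only [Nat.succ_ne_zero, if_neg, Nat.add_sub_cancel]
          exact (ih l).sub ((continuous_apply a).mul (ih (l + 1)))

/-- A monic complex polynomial of degree `n` is a product of `n` linear factors,
indexed by `Fin n`. -/
lemma monic_eq_prod_tuple {n : ℕ} {Q : ℂ[X]} (hm : Q.Monic) (hd : Q.natDegree = n) :
    ∃ z : Fin n → ℂ, Q = ∏ j, (X - Polynomial.C (z j)) := by
  have hs : Q.Splits := IsAlgClosed.splits Q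
  have hcard : Q.roots.card = n := by rw [← hd]; exact splits_iff_card_roots.mp hs
  set l := Q.roots.toList with hldef
  have hl : (l : Multiset ℂ) = Q.roots := Q.roots.coe_toList
  have hlen : l.length = n := by
    rw [← hcard, ← hl, Multiset.coe_card]
  subst hlen
  refine ⟨fun j => l.get j, ?_⟩
  have h1 : Q = (Q.roots.map fun a => X - Polynomial.C a).prod :=
    hs.eq_prod_roots_of_monic hm
  rw [h1, ← hl]
  rw [show ((l : Multiset ℂ).map fun a => X - Polynomial.C a) = ((l.map fun a => X - Polynomial.C a : List ℂ[X]) : Multiset ℂ[X]) from rfl]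
  rw [Multiset.prod_coe]
  conv_lhs => rw [← List.ofFn_get l]
  rw [List.map_ofFn, List.prod_ofFn]
  rfl

lemma roots_prod_tuple {n : ℕ} (z : Fin n → ℂ) :
    (∏ j, (X - Polynomial.C (z j))).roots = Multiset.map z Finset.univ.val := by
  rw [Finset.prod_eq_multiset_prod]
  have : Multiset.map (fun j => X - Polynomial.C (z j)) Finset.univ.val
      = Multiset.map (fun a => X - Polynomial.C a) (Multiset.map z Finset.univ.val) := by
    rw [Multiset.map_map]; rfl
  rw [this]
  exact roots_multiset_prod_X_sub_C _

open NNReal in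
lemma exists_subseq_tendsto_roots (n : ℕ) (Q : ℕ → ℂ[X]) (Q' : ℂ[X])
    (hQm : ∀ m, (Q m).Monic) (hQd : ∀ m, (Q m).natDegree = n)
    (hc : ∀ j, Tendsto (fun m => (Q m).coeff j) atTop (𝓝 (Q'.coeff j))) :
    ∃ φ : ℕ → ℕ, StrictMono φ ∧ ∃ z : ℕ → Fin n → ℂ, ∃ z' : Fin n → ℂ,
      (∀ m, Q (φ m) = ∏ j, (X - Polynomial.C (z m j))) ∧ (Q' = ∏ j, (X - Polynomial.C (z' j))) ∧
      ∀ j, Tendsto (fun m => z m j) atTop (𝓝 (z' j)) := by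
  choose w hw using fun m => monic_eq_prod_tuple (hQm m) (hQd m)
  have hbdd : ∀ j : ℕ, ∃ Bj : ℝ≥0, ∀ m, ‖(Q m).coeff j‖₊ ≤ Bj := by
    intro j
    obtain ⟨B, hB⟩ := ((continuous_nnnorm.tendsto _).comp (hc j)).bddAbove_range
    exact ⟨B, fun m => hB (Set.mem_range_self m)⟩
  choose Bf hBf using hbdd
  set B : ℝ≥0 := ∑ j ∈ Finset.range n, Bf j with hBdef
  have hroot : ∀ m j, ‖w m j‖₊ < B + 1 := by
    intro m j
    have hisroot : (Q m).IsRoot (w m j) := by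
      rw [hw m]
      simp only [IsRoot.def, eval_prod]
      exact Finset.prod_eq_zero (Finset.mem_univ j) (by simp)
    have hcb : cauchyBound (Q m) ≤ B + 1 := by
      rw [cauchyBound, (hQm m).leadingCoeff, nnnorm_one, div_one, hQd m]
      refine add_le_add_left (Finset.sup_le fun j hj => le_trans (hBf j m) ?_) 1
      exact Finset.single_le_sum (f := Bf) (fun _ _ => zero_le) hj
    exact lt_of_lt_of_le (IsRoot.norm_lt_cauchyBound (hQm m).ne_zero hisroot) hcb
  have hK : IsCompact (Set.univ.pi fun _ : Fin n => Metric.closedBall (0 : ℂ) ((B : ℝ) + 1)) :=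
    isCompact_univ_pi fun _ => isCompact_closedBall _ _
  have hmem : ∀ m, w m ∈ (Set.univ.pi fun _ : Fin n => Metric.closedBall (0 : ℂ) ((B : ℝ) + 1)) := by
    intro m
    refine Set.mem_univ_pi.mpr fun j => ?_
    rw [Metric.mem_closedBall, dist_zero_right]
    have := le_of_lt (hroot m j)
    exact_mod_cast this
  obtain ⟨z', _, φ, hφ, hconv⟩ := hK.tendsto_subseq hmem
  have hconvj : ∀ j, Tendsto (fun m => w (φ m) j) atTop (𝓝 (z' j)) :=
    fun j => ((continuous_apply j).tendsto z').comp hconv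
  refine ⟨φ, hφ, fun m => w (φ m), z', fun m => hw (φ m), ?_, hconvj⟩
  ext l
  have h1 : Tendsto (fun m => (Q (φ m)).coeff l) atTop (𝓝 (Q'.coeff l)) :=
    (hc l).comp hφ.tendsto_atTop
  have h2 : Tendsto (fun m => (Q (φ m)).coeff l) atTop
      (𝓝 ((∏ j, (X - Polynomial.C (z' j))).coeff l)) := by
    have hcont := continuous_coeff_prod_X_sub_C (Finset.univ : Finset (Fin n)) l
    have h3 := (hcont.tendsto z').comp hconv
    refine h3.congr fun m => ?_
    simp only [Function.comp_apply]
    rw [← hw (φ m)]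
  exact tendsto_nhds_unique h1 h2

lemma exists_const_subseq {α : Type*} [Finite α] (g : ℕ → α) :
    ∃ a, ∃ φ : ℕ → ℕ, StrictMono φ ∧ ∀ m, g (φ m) = a := by
  obtain ⟨a, ha⟩ := Finite.exists_infinite_fiber g
  have hfreq : ∃ᶠ m in atTop, g m = a :=
    Nat.frequently_atTop_iff_infinite.mpr (Set.infinite_coe_iff.mp ha)
  obtain ⟨φ, hφ, h⟩ := Filter.extraction_of_frequently_atTop hfreq
  exact ⟨a, φ, hφ, h⟩

lemma card_filter_roots_tuple {n : ℕ} (z : Fin n → ℂ) (p : ℂ → Prop) [DecidablePred p] :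
    ((∏ j, (X - Polynomial.C (z j))).roots.filter p).card
      = (Finset.univ.filter fun j => p (z j)).card := by
  rw [roots_prod_tuple, Multiset.filter_map, Multiset.card_map]
  rfl

lemma count_lt_eventually_ge (n : ℕ) (Q : ℕ → ℂ[X]) (Q' : ℂ[X])
    (hQm : ∀ m, (Q m).Monic) (hQd : ∀ m, (Q m).natDegree = n)
    (hc : ∀ j, Tendsto (fun m => (Q m).coeff j) atTop (𝓝 (Q'.coeff j)))
    (t : ℕ → ℝ) (t' : ℝ) (ht : Tendsto t atTop (𝓝 t')) :
    ∀ᶠ m in atTop, (Q'.roots.filter fun z => z.re < t').card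
        ≤ ((Q m).roots.filter fun z => z.re < t m).card := by
  classical
  set c' := (Q'.roots.filter fun z => z.re < t').card with hc'def
  by_contra hcon
  rw [Filter.not_eventually] at hcon
  obtain ⟨φ₀, hφ₀, h0⟩ := Filter.extraction_of_frequently_atTop hcon
  obtain ⟨φ₁, hφ₁, z, z', hfac, hfac', hz⟩ :=
    exists_subseq_tendsto_roots n (Q ∘ φ₀) Q' (fun m => hQm _) (fun m => hQd _)
      (fun j => (hc j).comp hφ₀.tendsto_atTop)
  set ψ : ℕ → ℕ := φ₀ ∘ φ₁ with hψdef
  set T : ℕ → Finset (Fin n) := fun m => Finset.univ.filter fun j => (z m j).re < t (ψ m)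
    with hTdef
  have hTcard : ∀ m, (T m).card = ((Q (ψ m)).roots.filter fun w => w.re < t (ψ m)).card := by
    intro m
    have : Q (ψ m) = ∏ j, (X - Polynomial.C (z m j)) := hfac m
    rw [this, card_filter_roots_tuple]
  have h0' : ∀ m, (T m).card < c' := by
    intro m
    rw [hTcard m]
    exact Nat.lt_of_not_le (h0 (φ₁ m))
  obtain ⟨S, φ₂, hφ₂, hS⟩ := exists_const_subseq T
  have hout : ∀ j, j ∉ S → t' ≤ (z' j).re := by
    intro j hj
    have hle : ∀ m, t (ψ (φ₂ m)) ≤ (z (φ₂ m) j).re := by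
      intro m
      by_contra hlt
      push_neg at hlt
      have hmem : j ∈ T (φ₂ m) := Finset.mem_filter.mpr ⟨Finset.mem_univ _, hlt⟩
      rw [hS m] at hmem
      exact hj hmem
    exact le_of_tendsto_of_tendsto'
      (ht.comp ((hφ₀.comp hφ₁).comp hφ₂).tendsto_atTop)
      ((Complex.continuous_re.tendsto _).comp ((hz j).comp hφ₂.tendsto_atTop)) hle
  have hsub : (Finset.univ.filter fun j => (z' j).re < t') ⊆ S := by
    intro j hj
    by_contra hjS
    have h1 := hout j hjS
    have h2 := (Finset.mem_filter.mp hj).2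
    linarith
  have hc'eq : c' = (Finset.univ.filter fun j => (z' j).re < t').card := by
    rw [hc'def, hfac', card_filter_roots_tuple]
  have hle1 : c' ≤ S.card := hc'eq ▸ Finset.card_le_card hsub
  have hlt1 : S.card < c' := hS 0 ▸ h0' (φ₂ 0)
  omega

lemma count_le_eventually_le (n : ℕ) (Q : ℕ → ℂ[X]) (Q' : ℂ[X])
    (hQm : ∀ m, (Q m).Monic) (hQd : ∀ m, (Q m).natDegree = n)
    (hc : ∀ j, Tendsto (fun m => (Q m).coeff j) atTop (𝓝 (Q'.coeff j)))
    (t : ℕ → ℝ) (t' : ℝ) (ht : Tendsto t atTop (𝓝 t')) :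
    ∀ᶠ m in atTop, ((Q m).roots.filter fun z => z.re ≤ t m).card
        ≤ (Q'.roots.filter fun z => z.re ≤ t').card := by
  classical
  set c' := (Q'.roots.filter fun z => z.re ≤ t').card with hc'def
  by_contra hcon
  rw [Filter.not_eventually] at hcon
  obtain ⟨φ₀, hφ₀, h0⟩ := Filter.extraction_of_frequently_atTop hcon
  obtain ⟨φ₁, hφ₁, z, z', hfac, hfac', hz⟩ :=
    exists_subseq_tendsto_roots n (Q ∘ φ₀) Q' (fun m => hQm _) (fun m => hQd _)
      (fun j => (hc j).comp hφ₀.tendsto_atTop)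
  set ψ : ℕ → ℕ := φ₀ ∘ φ₁ with hψdef
  set T : ℕ → Finset (Fin n) := fun m => Finset.univ.filter fun j => (z m j).re ≤ t (ψ m)
    with hTdef
  have hTcard : ∀ m, (T m).card = ((Q (ψ m)).roots.filter fun w => w.re ≤ t (ψ m)).card := by
    intro m
    have : Q (ψ m) = ∏ j, (X - Polynomial.C (z m j)) := hfac m
    rw [this, card_filter_roots_tuple]
  have h0' : ∀ m, c' < (T m).card := by
    intro m
    rw [hTcard m]
    exact Nat.lt_of_not_le (h0 (φ₁ m))
  obtain ⟨S, φ₂, hφ₂, hS⟩ := exists_const_subseq T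
  have hin : ∀ j, j ∈ S → (z' j).re ≤ t' := by
    intro j hj
    have hle : ∀ m, (z (φ₂ m) j).re ≤ t (ψ (φ₂ m)) := by
      intro m
      have hmem : j ∈ T (φ₂ m) := (hS m).symm ▸ hj
      exact (Finset.mem_filter.mp hmem).2
    exact le_of_tendsto_of_tendsto'
      ((Complex.continuous_re.tendsto _).comp ((hz j).comp hφ₂.tendsto_atTop))
      (ht.comp ((hφ₀.comp hφ₁).comp hφ₂).tendsto_atTop) hle
  have hsub : S ⊆ Finset.univ.filter fun j => (z' j).re ≤ t' := fun j hj =>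
    Finset.mem_filter.mpr ⟨Finset.mem_univ _, hin j hj⟩
  have hc'eq : c' = (Finset.univ.filter fun j => (z' j).re ≤ t').card := by
    rw [hc'def, hfac', card_filter_roots_tuple]
  have hle1 : S.card ≤ c' := hc'eq ▸ Finset.card_le_card hsub
  have hlt1 : c' < S.card := hS 0 ▸ h0' (φ₂ 0)
  omega
section cpolysec
variable {M N : Type*} [TopologicalSpace M] [TopologicalSpace N]

/-- The complexification of `P` evaluated (coefficientwise) at the point `y`. -/
noncomputable def cpoly (P : Polynomial C(N, ℝ)) (y : N) : ℂ[X] :=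
  (P.map (evRH y)).map Complex.ofRealHom

lemma phiPi_apply (π : C(M, N)) (g : C(N, ℝ)) (x : M) : phiPi π g x = g (π x) := rfl

variable {P : Polynomial C(N, ℝ)}

lemma cpoly_monic (hP : P.Monic) (y : N) : (cpoly P y).Monic :=
  (hP.map _).map _

lemma cpoly_natDegree (hP : P.Monic) (y : N) : (cpoly P y).natDegree = P.natDegree := by
  rw [cpoly, (hP.map (evRH y)).natDegree_map, hP.natDegree_map]

lemma cpoly_coeff (P : Polynomial C(N, ℝ)) (y : N) (j : ℕ) :
    (cpoly P y).coeff j = ((P.coeff j y : ℝ) : ℂ) := by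
  simp only [cpoly, coeff_map, Complex.ofRealHom_eq_coe]
  rfl

lemma cpoly_root (π : C(M, N)) (g : C(M, ℝ)) (hP : P.Monic)
    (hPe : Polynomial.eval₂ (phiPi π) g P = 0) (x : M) :
    ((g x : ℝ) : ℂ) ∈ (cpoly P (π x)).roots := by
  have h0 : Polynomial.eval₂ (evRH (π x)) (g x) P = 0 := by
    have h1 := congrArg (evRH x) hPe
    rw [Polynomial.hom_eval₂, map_zero] at h1
    have h2 : (evRH x).comp (phiPi π) = evRH (π x) := RingHom.ext fun _ => rfl
    rw [h2] at h1
    exact h1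
  have hne : cpoly P (π x) ≠ 0 := (cpoly_monic hP (π x)).ne_zero
  rw [mem_roots hne]
  show (cpoly P (π x)).eval (Complex.ofRealHom (g x)) = 0
  rw [cpoly, eval_map, Polynomial.eval₂_at_apply, eval_map, h0, map_zero]

end cpolysec


/-- Let `M, N` be metric spaces and `π : M → N` a continuous, closed
and surjective map. Let `f₁, …, f_k ∈ C(M, ℝ)` with each `fᵢ` integral over `C(N, ℝ)`
via `φ_π`, and suppose the subring of `C(M, ℝ)` generated by the image of `φ_π`
together with the `fᵢ` separates the points of `M`. Then there is a finite cover of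
`M` by closed subsets on each of which `π` is injective; in particular every element
of `C(M, ℝ)` is integral over `C(N, ℝ)` via `φ_π`. -/
theorem closed_cover_of_separating_integral_functions {M N : Type*} [MetricSpace M]
    [MetricSpace N] (π : C(M, N)) (hclosed : IsClosedMap π)
    (hsurj : Function.Surjective π) (k : ℕ) (f : Fin k → C(M, ℝ))
    (hint : ∀ i, (phiPi π).IsIntegralElem (f i))
    (hsep : ∀ p q : M, p ≠ q →
      ∃ h ∈ Subring.closure (Set.range (phiPi π) ∪ Set.range f), h p ≠ h q) :
    (∃ r : ℕ, ∃ Mi : Fin r → Set M, (∀ i, IsClosed (Mi i)) ∧ (⋃ i, Mi i) = Set.univ ∧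
        ∀ i, Set.InjOn π (Mi i)) ∧
      (phiPi π).IsIntegral := by
  classical
  choose P hPm hPe using hint
  set n : Fin k → ℕ := fun i => (P i).natDegree with hn
  have hrhobound : ∀ (x : M) (i : Fin k),
      (((cpoly (P i) (π x)).roots.filter fun z => z.re < f i x).card) ≤ n i := by
    intro x i
    calc ((cpoly (P i) (π x)).roots.filter fun z => z.re < f i x).card
        ≤ (cpoly (P i) (π x)).roots.card := Multiset.card_le_card (Multiset.filter_le _ _)
      _ ≤ (cpoly (P i) (π x)).natDegree := card_roots' _
      _ = n i := cpoly_natDegree (hPm i) (π x)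
  set ρ : M → (∀ i : Fin k, Fin (n i + 1)) := fun x i =>
    ⟨((cpoly (P i) (π x)).roots.filter fun z => z.re < f i x).card,
      Nat.lt_succ_of_le (hrhobound x i)⟩ with hρdef
  set r := Fintype.card (∀ i : Fin k, Fin (n i + 1)) with hrdef
  set e : Fin r ≃ (∀ i : Fin k, Fin (n i + 1)) := (Fintype.equivFin _).symm with hedef
  set Mi : Fin r → Set M := fun a => closure {x | ρ x = e a} with hMidef
  have hMc : ∀ a, IsClosed (Mi a) := fun a => isClosed_closure
  have hMu : (⋃ a, Mi a) = Set.univ := by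
    ext x
    simp only [Set.mem_iUnion, Set.mem_univ, iff_true]
    exact ⟨e.symm (ρ x), subset_closure (by simp)⟩
  have hMinj : ∀ a, Set.InjOn π (Mi a) := by
    intro a p hp q hq hπeq
    by_contra hne
    have hfi : ∃ i, f i p ≠ f i q := by
      by_contra hall
      push_neg at hall
      obtain ⟨h, hh, hhne⟩ := hsep p q hne
      refine hhne ?_
      refine Subring.closure_induction ?_ rfl rfl ?_ ?_ ?_ hh
      · rintro x (⟨g, rfl⟩ | ⟨i, rfl⟩)
        · show g (π p) = g (π q)
          rw [hπeq]
        · exact hall i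
      · intro x y _ _ hx hy
        show x p + y p = x q + y q
        rw [hx, hy]
      · intro x _ hx
        show -(x p) = -(x q)
        rw [hx]
      · intro x y _ _ hx hy
        show x p * y p = x q * y q
        rw [hx, hy]
    obtain ⟨i, hfne⟩ := hfi
    have key : ∀ p' q' : M, π p' = π q' → f i p' < f i q' →
        p' ∈ Mi a → q' ∈ Mi a → False := by
      intro p' q' hπ' hlt hp' hq'
      rw [hMidef] at hp' hq'
      obtain ⟨u, hu, hul⟩ := mem_closure_iff_seq_limit.mp hp'
      obtain ⟨v, hv, hvl⟩ := mem_closure_iff_seq_limit.mp hq'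
      have hcoeffu : ∀ j, Tendsto (fun m => (cpoly (P i) (π (u m))).coeff j) atTop
          (𝓝 ((cpoly (P i) (π p')).coeff j)) := by
        intro j
        simp only [cpoly_coeff]
        exact ((Complex.continuous_ofReal.comp
          (((P i).coeff j).continuous.comp π.continuous)).tendsto p').comp hul
      have hcoeffv : ∀ j, Tendsto (fun m => (cpoly (P i) (π (v m))).coeff j) atTop
          (𝓝 ((cpoly (P i) (π p')).coeff j)) := by
        intro j
        simp only [cpoly_coeff]
        rw [hπ']
        exact ((Complex.continuous_ofReal.comp
          (((P i).coeff j).continuous.comp π.continuous)).tendsto q').comp hvl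
      have hU := count_le_eventually_le (n i) (fun m => cpoly (P i) (π (u m)))
        (cpoly (P i) (π p')) (fun m => cpoly_monic (hPm i) _)
        (fun m => cpoly_natDegree (hPm i) _) hcoeffu
        (fun m => f i (u m)) (f i p') (((f i).continuous.tendsto p').comp hul)
      have hL := count_lt_eventually_ge (n i) (fun m => cpoly (P i) (π (v m)))
        (cpoly (P i) (π p')) (fun m => cpoly_monic (hPm i) _)
        (fun m => cpoly_natDegree (hPm i) _) hcoeffv
        (fun m => f i (v m)) (f i q') (((f i).continuous.tendsto q').comp hvl)
      obtain ⟨m1, hm1⟩ := hU.exists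
      obtain ⟨m2, hm2⟩ := hL.exists
      -- strict inequality at m1 because f i (u m1) is itself a root
      have hroot1 := cpoly_root π (f i) (hPm i) (hPe i) (u m1)
      have hstrict : ((cpoly (P i) (π (u m1))).roots.filter
            fun z => z.re < f i (u m1)).card
          < ((cpoly (P i) (π (u m1))).roots.filter
            fun z => z.re ≤ f i (u m1)).card := by
        refine Multiset.card_lt_card (lt_iff_le_and_ne.mpr ⟨?_, ?_⟩)
        · exact Multiset.monotone_filter_right _ fun z hz => le_of_lt hz
        · intro hEq
          have hmem : ((f i (u m1) : ℝ) : ℂ) ∈ (cpoly (P i) (π (u m1))).roots.filter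
              (fun z => z.re ≤ f i (u m1)) :=
            Multiset.mem_filter.mpr ⟨hroot1, by simp⟩
          rw [← hEq] at hmem
          have := (Multiset.mem_filter.mp hmem).2
          simp at this
      -- B ≤ B'
      have hBB' : ((cpoly (P i) (π p')).roots.filter fun z => z.re ≤ f i p').card
          ≤ ((cpoly (P i) (π p')).roots.filter fun z => z.re < f i q').card :=
        Multiset.card_le_card (Multiset.monotone_filter_right _
          fun z hz => lt_of_le_of_lt hz hlt)
      have h1 := congrArg (fun J : ∀ i : Fin k, Fin (n i + 1) => (J i : ℕ)) (hu m1)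
      have h2 := congrArg (fun J : ∀ i : Fin k, Fin (n i + 1) => (J i : ℕ)) (hv m2)
      simp only [hρdef] at h1 h2
      beta_reduce at hm1 hm2
      omega
    rcases lt_or_gt_of_ne hfne with hlt | hlt
    · exact key p q hπeq hlt hp hq
    · exact key q p hπeq.symm hlt hq hp
  refine ⟨⟨r, Mi, hMc, hMu, hMinj⟩, ?_⟩
  intro g
  have hext : ∀ a : Fin r, ∃ h : C(N, ℝ), ∀ x : M, x ∈ Mi a → h (π x) = g x := by
    intro a
    set emb : (Mi a) → N := fun s => π s.1 with hembdef
    have hembcont : Continuous emb := π.continuous.comp continuous_subtype_val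
    have hembinj : Function.Injective emb := fun x y h => Subtype.ext (hMinj a x.2 y.2 h)
    have hembclosed : IsClosedMap emb := by
      intro A hA
      have h1 := (hMc a).isClosedEmbedding_subtypeVal.isClosedMap
      have h2 : emb '' A = π '' (((↑) : (Mi a) → M) '' A) := by
        rw [← Set.image_comp]; rfl
      rw [h2]
      exact hclosed _ (h1 _ hA)
    have hce : IsClosedEmbedding emb :=
      IsClosedEmbedding.of_continuous_injective_isClosedMap hembcont hembinj hembclosed
    obtain ⟨h, hh⟩ := ContinuousMap.exists_extension' hce
      (⟨fun s => g s.1, g.continuous.comp continuous_subtype_val⟩ : C(Mi a, ℝ))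
    refine ⟨h, fun x hx => ?_⟩
    exact congrFun hh (⟨x, hx⟩ : Mi a)
  choose hfun hprop using hext
  refine ⟨∏ a : Fin r, (X - Polynomial.C (hfun a)), monic_prod_of_monic _ _ fun a _ => monic_X_sub_C _, ?_⟩
  have hev : Polynomial.eval₂ (phiPi π) g (∏ a : Fin r, (X - Polynomial.C (hfun a)))
      = ∏ a : Fin r, (g - phiPi π (hfun a)) := by
    rw [Polynomial.eval₂_finset_prod]
    exact Finset.prod_congr rfl fun a _ => by rw [eval₂_sub, eval₂_X, eval₂_C]
  rw [hev]
  ext x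
  have hx : ∃ a, x ∈ Mi a := by
    have := Set.mem_univ x
    rw [← hMu] at this
    simpa [Set.mem_iUnion] using this
  obtain ⟨a, ha⟩ := hx
  show (∏ a : Fin r, (g - phiPi π (hfun a))) x = (0 : C(M, ℝ)) x
  have hmap := map_prod (evRH x) (fun a => g - phiPi π (hfun a)) Finset.univ
  have hzero : (evRH x) (g - phiPi π (hfun a)) = 0 := by
    simp only [map_sub]
    show g x - phiPi π (hfun a) x = 0
    rw [phiPi_apply, hprop a x ha, sub_self]
  calc (∏ a : Fin r, (g - phiPi π (hfun a))) x
      = (evRH x) (∏ a : Fin r, (g - phiPi π (hfun a))) := rfl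
    _ = ∏ a : Fin r, (evRH x) (g - phiPi π (hfun a)) := hmap
    _ = 0 := Finset.prod_eq_zero (Finset.mem_univ a) hzero
    _ = (0 : C(M, ℝ)) x := rfl
end

section
/- Let M and N be metric spaces and π : M → N a continuous, closed and surjective map, and let f ∈ C(M,ℝ) be integral over C(N,ℝ) via φ_π and injective on each fiber of π. Then there exists a finite cover M = M₁ ∪ ⋯ ∪ M_r by closed subsets such that each restriction π|_{M_i} is injective; in particular, every element of C(M,ℝ) is integral over C(N,ℝ) via φ_π. -/
open ContinuousMap Polynomial Filter Topology

lemma monic_root_norm_le {q : Polynomial ℂ} (hq : q.Monic) {z : ℂ} (hz : q.IsRoot z) :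
    ‖z‖ ≤ 1 + ∑ i ∈ Finset.range q.natDegree, ‖q.coeff i‖ := by
  set n := q.natDegree with hn
  have hsum : (0:ℝ) ≤ ∑ i ∈ Finset.range n, ‖q.coeff i‖ :=
    Finset.sum_nonneg fun i _ => norm_nonneg _
  rcases le_or_gt ‖z‖ 1 with h | h
  · linarith
  rcases Nat.eq_zero_or_pos n with h0 | h0
  · exfalso
    have hq1 : q = 1 := hq.natDegree_eq_zero.mp h0
    rw [hq1] at hz
    simpa using hz.eq_zero
  -- main case
  have heval : (0:ℂ) = ∑ i ∈ Finset.range (n+1), q.coeff i * z ^ i := by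
    have h2 := eval_eq_sum_range' (p := q) (n := n+1) (by omega) z
    rw [hz.eq_zero] at h2
    exact h2
  have htop : z ^ n = -∑ i ∈ Finset.range n, q.coeff i * z ^ i := by
    rw [Finset.sum_range_succ] at heval
    have hcn : q.coeff n = 1 := hq.coeff_natDegree
    rw [hcn, one_mul] at heval
    linear_combination -heval
  have hnorm : ‖z‖ ^ n ≤ (∑ i ∈ Finset.range n, ‖q.coeff i‖) * ‖z‖ ^ (n-1) := by
    calc ‖z‖ ^ n = ‖z ^ n‖ := (norm_pow z n).symm
    _ = ‖∑ i ∈ Finset.range n, q.coeff i * z ^ i‖ := by rw [htop, norm_neg]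
    _ ≤ ∑ i ∈ Finset.range n, ‖q.coeff i * z ^ i‖ := norm_sum_le _ _
    _ ≤ ∑ i ∈ Finset.range n, ‖q.coeff i‖ * ‖z‖ ^ (n-1) := by
        refine Finset.sum_le_sum fun i hi => ?_
        rw [norm_mul, norm_pow]
        refine mul_le_mul_of_nonneg_left ?_ (norm_nonneg _)
        exact pow_le_pow_right₀ h.le (by have := Finset.mem_range.mp hi; omega)
    _ = (∑ i ∈ Finset.range n, ‖q.coeff i‖) * ‖z‖ ^ (n-1) := by
        rw [Finset.sum_mul]
  have hzpos : (0:ℝ) < ‖z‖ ^ (n-1) := pow_pos (by linarith) _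
  have hle : ‖z‖ ≤ ∑ i ∈ Finset.range n, ‖q.coeff i‖ := by
    have : ‖z‖ ^ (n-1) * ‖z‖ ≤ ‖z‖ ^ (n-1) * (∑ i ∈ Finset.range n, ‖q.coeff i‖) := by
      rw [← pow_succ]
      have : n - 1 + 1 = n := by omega
      rw [this]
      linarith [hnorm]
    exact le_of_mul_le_mul_left this hzpos
  linarith

lemma card_roots_monic' {q : Polynomial ℂ} (_hq : q.Monic) :
    Multiset.card q.roots = q.natDegree :=
  (splits_iff_card_roots.mp (IsAlgClosed.splits q))

lemma exists_subseq_roots_tendsto :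
    ∀ (n : ℕ) (q : ℕ → Polynomial ℂ) (Q : Polynomial ℂ),
      (∀ j, (q j).Monic) → (∀ j, (q j).natDegree = n) → Q.Monic → Q.natDegree = n →
      (∀ i, Tendsto (fun j => (q j).coeff i) atTop (𝓝 (Q.coeff i))) →
      ∃ ψ : ℕ → ℕ, StrictMono ψ ∧ ∃ (z : Fin n → ℕ → ℂ) (w : Fin n → ℂ),
        (∀ i, Tendsto (z i) atTop (𝓝 (w i))) ∧
        (∀ j, (q (ψ j)).roots = (Finset.univ.val.map fun i => z i j)) ∧
        Q.roots = Finset.univ.val.map w := by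
  intro n
  induction n with
  | zero =>
    intro q Q hm hd hQm hQd _
    refine ⟨id, strictMono_id, Fin.elim0, Fin.elim0, fun i => i.elim0, fun j => ?_, ?_⟩
    · have : q j = 1 := (hm j).natDegree_eq_zero.mp (hd j)
      simp [this]
    · have : Q = 1 := hQm.natDegree_eq_zero.mp hQd
      simp [this]
  | succ n IH =>
    intro q Q hm hd hQm hQd hconv
    -- a convergent bound on coefficients
    set B : ℕ → ℝ := fun j => 1 + ∑ i ∈ Finset.range (n+1), ‖(q j).coeff i‖ with hB
    have hBconv : Tendsto B atTop (𝓝 (1 + ∑ i ∈ Finset.range (n+1), ‖Q.coeff i‖)) := by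
      refine Tendsto.const_add _ (tendsto_finset_sum _ fun i _ => (hconv i).norm)
    obtain ⟨Bb, hBb⟩ := hBconv.bddAbove_range
    have hBb' : ∀ j, B j ≤ Bb := fun j => hBb (Set.mem_range_self j)
    -- choose a root of each q j
    have hcard : ∀ j, Multiset.card (q j).roots = n+1 := fun j => (card_roots_monic' (hm j)).trans (hd j)
    have hex : ∀ j, ∃ z, z ∈ (q j).roots := by
      intro j
      apply Multiset.exists_mem_of_ne_zero
      intro h0
      have hc := hcard j
      rw [h0] at hc
      simpa using hc
    set r : ℕ → ℂ := fun j => (hex j).choose with hr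
    have hrmem : ∀ j, r j ∈ (q j).roots := fun j => (hex j).choose_spec
    have hrroot : ∀ j, (q j).IsRoot (r j) := fun j => (mem_roots'.mp (hrmem j)).2
    have hrb : ∀ j, r j ∈ Metric.closedBall (0:ℂ) Bb := by
      intro j
      rw [Metric.mem_closedBall, dist_zero_right]
      refine le_trans ?_ (hBb' j)
      have := monic_root_norm_le (hm j) (hrroot j)
      rwa [hd j] at this
    obtain ⟨z0, _, φ, hφ, hrφ⟩ :=
      (isCompact_closedBall (0:ℂ) Bb).tendsto_subseq hrb
    have hφtop : Tendsto φ atTop atTop := hφ.tendsto_atTop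
    -- z0 is a root of Q
    have hz0 : Q.IsRoot z0 := by
      have h1 : Tendsto (fun j => eval (r (φ j)) (q (φ j))) atTop (𝓝 (eval z0 Q)) := by
        have he : ∀ j, eval (r (φ j)) (q (φ j)) =
            ∑ i ∈ Finset.range (n+2), (q (φ j)).coeff i * (r (φ j)) ^ i := by
          intro j
          exact eval_eq_sum_range' (by rw [hd]; omega) _
        have heQ : eval z0 Q = ∑ i ∈ Finset.range (n+2), Q.coeff i * z0 ^ i :=
          eval_eq_sum_range' (by rw [hQd]; omega) _
        rw [heQ]
        simp only [he]
        refine tendsto_finset_sum _ fun i _ => Tendsto.mul ((hconv i).comp hφtop) ?_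
        exact ((continuous_pow i).tendsto z0).comp hrφ
      have h2 : (fun j => eval (r (φ j)) (q (φ j))) = fun _ => (0:ℂ) := by
        funext j; exact (hrroot (φ j)).eq_zero
      rw [h2] at h1
      exact (tendsto_nhds_unique tendsto_const_nhds h1).symm
    -- factor
    set g : ℕ → Polynomial ℂ := fun j => (q j) /ₘ (X - Polynomial.C (r j)) with hg
    set G : Polynomial ℂ := Q /ₘ (X - Polynomial.C z0) with hG
    have hfac : ∀ j, (X - Polynomial.C (r j)) * g j = q j :=
      fun j => mul_divByMonic_eq_iff_isRoot.mpr (hrroot j)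
    have hfacQ : (X - Polynomial.C z0) * G = Q := mul_divByMonic_eq_iff_isRoot.mpr hz0
    have hgm : ∀ j, (g j).Monic := by
      intro j
      exact (monic_X_sub_C (r j)).of_mul_monic_left (by rw [hfac j]; exact hm j)
    have hGm : G.Monic := (monic_X_sub_C z0).of_mul_monic_left (by rw [hfacQ]; exact hQm)
    have hgd : ∀ j, (g j).natDegree = n := by
      intro j
      have h1 : (q j).natDegree = ((X - Polynomial.C (r j)) * g j).natDegree := by rw [hfac j]
      rw [natDegree_mul (X_sub_C_ne_zero (r j)) (hgm j).ne_zero, natDegree_X_sub_C, hd j] at h1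
      omega
    have hGd : G.natDegree = n := by
      have h1 : Q.natDegree = ((X - Polynomial.C z0) * G).natDegree := by rw [hfacQ]
      rw [natDegree_mul (X_sub_C_ne_zero z0) hGm.ne_zero, natDegree_X_sub_C, hQd] at h1
      omega
    -- coefficient recursion
    have hco : ∀ j i, (g j).coeff i = (q j).coeff (i+1) + r j * (g j).coeff (i+1) := by
      intro j i
      have h1 := congrArg (fun p => Polynomial.coeff p (i+1)) (hfac j)
      simp only [sub_mul, coeff_sub, coeff_X_mul, coeff_C_mul] at h1
      linear_combination h1
    have hcoQ : ∀ i, G.coeff i = Q.coeff (i+1) + z0 * G.coeff (i+1) := by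
      intro i
      have h1 := congrArg (fun p => Polynomial.coeff p (i+1)) hfacQ
      simp only [sub_mul, coeff_sub, coeff_X_mul, coeff_C_mul] at h1
      linear_combination h1
    -- coefficients of g converge (along φ)
    have hP : ∀ i, Tendsto (fun j => (g (φ j)).coeff i) atTop (𝓝 (G.coeff i)) := by
      have hbase : ∀ i, n ≤ i → Tendsto (fun j => (g (φ j)).coeff i) atTop (𝓝 (G.coeff i)) := by
        intro i hi
        rcases eq_or_lt_of_le hi with h | h
        · have h1 : ∀ j, (g (φ j)).coeff i = 1 := by
            intro j; rw [← h, ← hgd (φ j)]; exact (hgm (φ j)).coeff_natDegree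
          have h2 : G.coeff i = 1 := by rw [← h, ← hGd]; exact hGm.coeff_natDegree
          simp only [h1, h2]; exact tendsto_const_nhds
        · have h1 : ∀ j, (g (φ j)).coeff i = 0 := by
            intro j; exact coeff_eq_zero_of_natDegree_lt (by rw [hgd]; omega)
          have h2 : G.coeff i = 0 := coeff_eq_zero_of_natDegree_lt (by rw [hGd]; omega)
          simp only [h1, h2]; exact tendsto_const_nhds
      have hstep : ∀ i, Tendsto (fun j => (g (φ j)).coeff (i+1)) atTop (𝓝 (G.coeff (i+1))) →
          Tendsto (fun j => (g (φ j)).coeff i) atTop (𝓝 (G.coeff i)) := by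
        intro i hi
        have h1 : (fun j => (g (φ j)).coeff i) =
            fun j => (q (φ j)).coeff (i+1) + r (φ j) * (g (φ j)).coeff (i+1) := by
          funext j; exact hco (φ j) i
        rw [h1, hcoQ i]
        exact Tendsto.add ((hconv (i+1)).comp hφtop) (Tendsto.mul hrφ hi)
      have hall : ∀ k i, n - k ≤ i → Tendsto (fun j => (g (φ j)).coeff i) atTop (𝓝 (G.coeff i)) := by
        intro k
        induction k with
        | zero => intro i hi; exact hbase i (by omega)
        | succ k ih =>
          intro i hi
          by_cases h : n - k ≤ i
          · exact ih i h
          · exact hstep i (ih (i+1) (by omega))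
      exact fun i => hall n i (by omega)
    obtain ⟨ψ', hψ', z', w', hzw', hroots', hQroots'⟩ :=
      IH (fun j => g (φ j)) G (fun j => hgm (φ j)) (fun j => hgd (φ j)) hGm hGd hP
    refine ⟨φ ∘ ψ', hφ.comp hψ', Fin.cons (fun j => r (φ (ψ' j))) z', Fin.cons z0 w', ?_, ?_, ?_⟩
    · intro i
      refine Fin.cases ?_ ?_ i
      · simp only [Fin.cons_zero]
        exact hrφ.comp hψ'.tendsto_atTop
      · intro i'
        simp only [Fin.cons_succ]
        exact hzw' i'
    · intro j
      have h1 : (q (φ (ψ' j))).roots = r (φ (ψ' j)) ::ₘ (g (φ (ψ' j))).roots := by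
        rw [← hfac (φ (ψ' j)), roots_mul (by rw [hfac]; exact (hm _).ne_zero),
          roots_X_sub_C, Multiset.singleton_add]
      simp only [Function.comp_apply]
      rw [h1, hroots' j]
      simp [Fin.univ_val_map, List.ofFn_succ]
    · have h1 : Q.roots = z0 ::ₘ G.roots := by
        rw [← hfacQ, roots_mul (by rw [hfacQ]; exact hQm.ne_zero),
          roots_X_sub_C, Multiset.singleton_add]
      rw [h1, hQroots']
      simp [Fin.univ_val_map, List.ofFn_succ]

lemma count_roots_le_limit (n k : ℕ) (ρ : ℂ → ℝ) (hρ : Continuous ρ)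
    (q : ℕ → Polynomial ℂ) (Q : Polynomial ℂ) (c : ℕ → ℝ) (C : ℝ)
    (hm : ∀ j, (q j).Monic) (hd : ∀ j, (q j).natDegree = n)
    (hQm : Q.Monic) (hQd : Q.natDegree = n)
    (hconv : ∀ i, Tendsto (fun j => (q j).coeff i) atTop (𝓝 (Q.coeff i)))
    (hc : Tendsto c atTop (𝓝 C))
    (hk : ∀ j, k ≤ Multiset.card ((q j).roots.filter (fun z => ρ z ≤ c j))) :
    k ≤ Multiset.card (Q.roots.filter (fun z => ρ z ≤ C)) := by
  obtain ⟨ψ, hψ, z, w, hzw, hroots, hQroots⟩ :=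
    exists_subseq_roots_tendsto n q Q hm hd hQm hQd hconv
  rw [hQroots, Multiset.filter_map, Multiset.card_map]
  -- for every i with C < ρ (w i), eventually c (ψ j) < ρ (z i j)
  have hbad : ∀ᶠ j in atTop, ∀ i ∈ (Finset.univ.filter (fun i : Fin n => C < ρ (w i))),
      c (ψ j) < ρ (z i j) := by
    rw [eventually_all_finset]
    intro i hi
    have h1 : Tendsto (fun j => ρ (z i j)) atTop (𝓝 (ρ (w i))) :=
      (hρ.tendsto (w i)).comp (hzw i)
    exact Filter.Tendsto.eventually_lt (hc.comp hψ.tendsto_atTop) h1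
      (Finset.mem_filter.mp hi).2
  obtain ⟨j, hj⟩ := hbad.exists
  have h2 := hk (ψ j)
  rw [hroots j, Multiset.filter_map, Multiset.card_map] at h2
  refine le_trans h2 (Multiset.card_le_card (Multiset.monotone_filter_right _ ?_))
  intro i hi
  simp only [Function.comp_apply] at hi ⊢
  by_contra hC
  push_neg at hC
  have := hj i (Finset.mem_filter.mpr ⟨Finset.mem_univ i, hC⟩)
  linarith

/-- Let `M, N` be metric spaces, `π : M → N` a continuous, closed and
surjective map, and `f ∈ C(M, ℝ)` integral over `C(N, ℝ)` via `φ_π` and injective on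
each fiber of `π`. Then there is a finite cover of `M` by closed subsets on each of
which `π` is injective; in particular every element of `C(M, ℝ)` is integral over
`C(N, ℝ)` via `φ_π`. -/
theorem closed_cover_of_fiber_separating_integral_function {M N : Type*} [MetricSpace M]
    [MetricSpace N] (π : C(M, N)) (hclosed : IsClosedMap π)
    (hsurj : Function.Surjective π) (f : C(M, ℝ))
    (hint : (phiPi π).IsIntegralElem f)
    (hfib : ∀ y : N, Set.InjOn f (⇑π ⁻¹' {y})) :
    (∃ r : ℕ, ∃ Mi : Fin r → Set M, (∀ i, IsClosed (Mi i)) ∧ (⋃ i, Mi i) = Set.univ ∧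
        ∀ i, Set.InjOn π (Mi i)) ∧
      (phiPi π).IsIntegral := by
  rcases isEmpty_or_nonempty M with hM | hM
  · constructor
    · refine ⟨0, Fin.elim0, fun i => i.elim0, ?_, fun i => i.elim0⟩
      rw [Set.iUnion_of_empty]
      exact (Set.univ_eq_empty_iff.mpr hM).symm
    · intro g
      refine ⟨X, monic_X, ?_⟩
      rw [eval₂_X]
      haveI : Subsingleton C(M, ℝ) := ⟨fun a b => ContinuousMap.ext fun x => (hM.false x).elim⟩
      exact Subsingleton.elim g 0
  obtain ⟨p, hpm, hp0⟩ := hint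
  set n := p.natDegree with hndef
  -- n ≥ 1
  have hn : 1 ≤ n := by
    by_contra hc
    have h0 : p = 1 := hpm.natDegree_eq_zero.mp (by omega)
    rw [h0, eval₂_one] at hp0
    obtain ⟨x0⟩ := hM
    have := DFunLike.congr_fun hp0 x0
    simpa using this
  -- evaluation homomorphisms and the complex-coefficient polynomials
  set evN : N → (C(N, ℝ) →+* ℝ) := fun y => (ContinuousMap.evalAlgHom ℝ ℝ y).toRingHom with hevN
  set Qp : N → Polynomial ℂ := fun y => (p.map (evN y)).map Complex.ofRealHom with hQp
  have hQm : ∀ y, (Qp y).Monic := fun y => (hpm.map (evN y)).map Complex.ofRealHom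
  have hQd : ∀ y, (Qp y).natDegree = n := by
    intro y
    rw [hQp]
    simp only
    rw [(hpm.map (evN y)).natDegree_map Complex.ofRealHom, hpm.natDegree_map]
  have hQcoeff : ∀ y i, (Qp y).coeff i = ((p.coeff i) y : ℂ) := by
    intro y i
    rw [hQp]
    simp [coeff_map]
    rfl
  -- f x is a root of Qp (π x)
  have hroot : ∀ x : M, (Qp (π x)).IsRoot ((f x : ℝ) : ℂ) := by
    intro x
    set evM : C(M, ℝ) →+* ℝ := (ContinuousMap.evalAlgHom ℝ ℝ x).toRingHom with hevM
    have h1 : evM (eval₂ (phiPi π) f p) = eval₂ (evM.comp (phiPi π)) (evM f) p :=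
      hom_eval₂ p (phiPi π) evM f
    rw [hp0, map_zero] at h1
    have h2 : evM.comp (phiPi π) = evN (π x) := RingHom.ext fun h => rfl
    rw [h2] at h1
    have h3 : eval (f x) (p.map (evN (π x))) = 0 := by
      rw [eval_map]
      exact h1.symm
    show eval ((f x : ℂ)) ((p.map (evN (π x))).map Complex.ofRealHom) = 0
    rw [eval_map]
    have h4 : ((f x : ℝ) : ℂ) = Complex.ofRealHom (f x) := rfl
    rw [h4, eval₂_hom, h3, map_zero]
  -- the cover
  set Mi : Fin n → Set M := fun k =>
    {x | (k : ℕ) + 1 ≤ Multiset.card ((Qp (π x)).roots.filter (fun z => z.re ≤ f x)) ∧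
      n - (k : ℕ) ≤ Multiset.card ((Qp (π x)).roots.filter (fun z => f x ≤ z.re))} with hMi
  -- coefficients converge along convergent sequences
  have hcoefftend : ∀ (u : ℕ → M) (a : M), Tendsto u atTop (𝓝 a) → ∀ i : ℕ,
      Tendsto (fun j => (Qp (π (u j))).coeff i) atTop (𝓝 ((Qp (π a)).coeff i)) := by
    intro u a hua i
    simp only [hQcoeff]
    exact ((Complex.continuous_ofReal.comp
      ((p.coeff i).continuous.comp π.continuous)).tendsto a).comp hua
  have hMiClosed : ∀ k, IsClosed (Mi k) := by
    intro k
    apply IsSeqClosed.isClosed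
    intro u a hu hua
    constructor
    · exact count_roots_le_limit n ((k : ℕ) + 1) Complex.re Complex.continuous_re
        (fun j => Qp (π (u j))) (Qp (π a)) (fun j => f (u j)) (f a)
        (fun j => hQm _) (fun j => hQd _) (hQm _) (hQd _)
        (hcoefftend u a hua) ((f.continuous.tendsto a).comp hua)
        (fun j => (hu j).1)
    · have h1 := count_roots_le_limit n (n - (k : ℕ)) (fun z => -z.re)
        (Complex.continuous_re.neg)
        (fun j => Qp (π (u j))) (Qp (π a)) (fun j => -(f (u j))) (-(f a))
        (fun j => hQm _) (fun j => hQd _) (hQm _) (hQd _)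
        (hcoefftend u a hua) (((f.continuous.tendsto a).comp hua).neg)
        (fun j => ?_)
      · refine le_trans h1 (le_of_eq ?_)
        congr 1
        apply Multiset.filter_congr
        intro z _
        simp only [neg_le_neg_iff]
      · refine le_trans (hu j).2 (le_of_eq ?_)
        congr 1
        apply Multiset.filter_congr
        intro z _
        simp only [neg_le_neg_iff]
  -- basic counting facts
  have hmemroot : ∀ x : M, ((f x : ℝ) : ℂ) ∈ (Qp (π x)).roots := fun x =>
    mem_roots'.mpr ⟨(hQm (π x)).ne_zero, hroot x⟩
  have hcardroots : ∀ y, Multiset.card (Qp y).roots = n :=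
    fun y => (card_roots_monic' (hQm y)).trans (hQd y)
  -- the cover covers
  have hcover : ∀ x : M, ∃ k : Fin n, x ∈ Mi k := by
    intro x
    set a := Multiset.card ((Qp (π x)).roots.filter (fun z => z.re ≤ f x)) with hadef
    set b := Multiset.card ((Qp (π x)).roots.filter (fun z => f x ≤ z.re)) with hbdef
    have ha1 : 1 ≤ a :=
      Multiset.card_pos_iff_exists_mem.mpr
        ⟨_, Multiset.mem_filter.mpr ⟨hmemroot x, by simp⟩⟩
    have ha2 : a ≤ n := by
      rw [hadef, ← hcardroots (π x)]
      exact Multiset.card_le_card (Multiset.filter_le _ _)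
    have hab : n + 1 ≤ a + b := by
      have h2 : 0 < Multiset.card
          (Multiset.filter (fun z => z.re ≤ f x ∧ f x ≤ z.re) ((Qp (π x)).roots)) :=
        Multiset.card_pos_iff_exists_mem.mpr
          ⟨_, Multiset.mem_filter.mpr ⟨hmemroot x, by simp⟩⟩
      have h3 : a + b = n + Multiset.card
          (Multiset.filter (fun z => z.re ≤ f x ∧ f x ≤ z.re) ((Qp (π x)).roots)) := by
        rw [hadef, hbdef, ← Multiset.card_add, Multiset.filter_add_filter,
          Multiset.card_add, Multiset.filter_eq_self.mpr (fun z _ => le_total _ _),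
          hcardroots]
      omega
    refine ⟨⟨a - 1, by omega⟩, ?_, ?_⟩
    · show (⟨a - 1, by omega⟩ : Fin n).val + 1 ≤ a
      simp only [Fin.val_mk]
      omega
    · show n - (⟨a - 1, by omega⟩ : Fin n).val ≤ b
      simp only [Fin.val_mk]
      omega
  -- injectivity on each piece
  have hkey : ∀ (k : Fin n) (x x' : M), π x = π x' → f x < f x' →
      x ∈ Mi k → x' ∈ Mi k → False := by
    intro k x x' hpi hff hx hx'
    have h1 : (k : ℕ) + 1 ≤
        Multiset.card ((Qp (π x')).roots.filter (fun z => z.re ≤ f x)) := by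
      have := hx.1
      rwa [hpi] at this
    have h2 : n - (k : ℕ) ≤
        Multiset.card ((Qp (π x')).roots.filter (fun z => f x' ≤ z.re)) := hx'.2
    have hsum : Multiset.card ((Qp (π x')).roots.filter (fun z => z.re ≤ f x)) +
        Multiset.card ((Qp (π x')).roots.filter (fun z => f x' ≤ z.re)) ≤ n := by
      have hnil : Multiset.filter (fun z => z.re ≤ f x ∧ f x' ≤ z.re)
          ((Qp (π x')).roots) = 0 :=
        Multiset.filter_eq_nil.mpr (fun z _ h => by
          have := h.1; have := h.2; linarith)
      calc Multiset.card ((Qp (π x')).roots.filter (fun z => z.re ≤ f x)) +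
          Multiset.card ((Qp (π x')).roots.filter (fun z => f x' ≤ z.re))
          = Multiset.card (Multiset.filter
              (fun z => z.re ≤ f x ∨ f x' ≤ z.re) ((Qp (π x')).roots)) := by
            rw [← Multiset.card_add, Multiset.filter_add_filter, hnil,
              Multiset.card_add]
            simp
        _ ≤ Multiset.card ((Qp (π x')).roots) :=
            Multiset.card_le_card (Multiset.filter_le _ _)
        _ = n := hcardroots _
    have hk := k.isLt
    omega
  have hinj : ∀ k, Set.InjOn π (Mi k) := by
    intro k x hx x' hx' hpi
    rcases lt_trichotomy (f x) (f x') with h | h | h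
    · exact (hkey k x x' hpi h hx hx').elim
    · exact hfib (π x) (Set.mem_preimage.mpr rfl)
        (Set.mem_preimage.mpr (Set.mem_singleton_iff.mpr hpi.symm)) h
    · exact (hkey k x' x hpi.symm h hx' hx).elim
  constructor
  · exact ⟨n, Mi, hMiClosed, Set.iUnion_eq_univ_iff.mpr hcover, hinj⟩
  -- integrality of every element
  intro g
  have hext : ∀ k : Fin n, ∃ G : C(N, ℝ), ∀ x, x ∈ Mi k → G (π x) = g x := by
    intro k
    have hcont : Continuous (fun u : (Mi k) => π u.1) :=
      π.continuous.comp continuous_subtype_val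
    have hinj2 : Function.Injective (fun u : (Mi k) => π u.1) := fun u v huv =>
      Subtype.ext (hinj k u.2 v.2 huv)
    have hclosed2 : IsClosedMap (fun u : (Mi k) => π u.1) := by
      intro A hA
      have h1 : (fun u : (Mi k) => π u.1) '' A = π '' (Subtype.val '' A) := by
        rw [Set.image_image]
      rw [h1]
      exact hclosed _ (((hMiClosed k).isClosedEmbedding_subtypeVal).isClosedMap A hA)
    have he : IsClosedEmbedding (fun u : (Mi k) => π u.1) :=
      IsClosedEmbedding.of_continuous_injective_isClosedMap hcont hinj2 hclosed2
    obtain ⟨G, hG⟩ := ContinuousMap.exists_extension he (g.restrict (Mi k))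
    refine ⟨G, fun x hx => ?_⟩
    have h2 := DFunLike.congr_fun hG (⟨x, hx⟩ : (Mi k))
    simpa using h2
  choose G hG using hext
  refine ⟨∏ k : Fin n, (X - Polynomial.C (G k)),
    monic_prod_of_monic _ _ (fun k _ => monic_X_sub_C _), ?_⟩
  rw [eval₂_finset_prod]
  apply ContinuousMap.ext
  intro x
  obtain ⟨k, hk⟩ := hcover x
  rw [ContinuousMap.zero_apply, ContinuousMap.prod_apply]
  apply Finset.prod_eq_zero (Finset.mem_univ k)
  simp only [eval₂_sub, eval₂_X, eval₂_C, ContinuousMap.sub_apply]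
  have h3 : (phiPi π (G k)) x = (G k) (π x) := rfl
  rw [h3, hG k x hk, sub_self]
end

section
/- Let M be a compact topological space, N a topological space and π : M → N a continuous surjective map. Suppose there exists g ∈ C(M,ℝ) such that every element of C(M,ℝ) can be written as a polynomial in g with coefficients in the image of φ_π (i.e. C(M,ℝ) = φ_π(C(N,ℝ))[g]). Then g, and hence every element of C(M,ℝ), is integral over C(N,ℝ) via φ_π; consequently C(M,ℝ) is a finitely generated C(N,ℝ)-module. -/
open Polynomial Multiset Finset

namespace SIF



/-- Truncated inversion `ℂ → ℂ`, continuous, equal to `z⁻¹` on reals `≥ c₀ > 0`. -/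
noncomputable def psi (c₀ : ℝ) (z : ℂ) : ℂ := z / (((max ‖z‖ c₀ : ℝ) : ℂ))^2

lemma psi_continuous {c₀ : ℝ} (hc : 0 < c₀) : Continuous (psi c₀) := by
  apply Continuous.div continuous_id
  · exact (Complex.continuous_ofReal.comp ((continuous_norm).max continuous_const)).pow 2
  · intro z
    have h1 : (0:ℝ) < max ‖z‖ c₀ := lt_max_of_lt_right hc
    simp only [ne_eq, pow_eq_zero_iff, OfNat.ofNat_ne_zero, not_false_eq_true]
    intro h
    exact absurd (by exact_mod_cast congrArg Complex.re h) (ne_of_gt h1)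

lemma psi_real {c₀ t : ℝ} (hc : 0 < c₀) (h : c₀ ≤ t) : psi c₀ (t : ℂ) = ((t : ℂ))⁻¹ := by
  have ht : 0 < t := lt_of_lt_of_le hc h
  have h1 : max ‖(t:ℂ)‖ c₀ = t := by
    rw [Complex.norm_real, Real.norm_eq_abs, abs_of_pos ht]
    exact max_eq_left h
  rw [psi, h1]
  have : (t:ℂ) ≠ 0 := by exact_mod_cast ne_of_gt ht
  field_simp

variable (m : ℕ)
noncomputable def polyOf (c : Fin m → ℂ) : ℂ[X] := X ^ m + ∑ i : Fin m, C (c i) * X ^ (i : ℕ)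

lemma sum_degree_lt (c : Fin m → ℂ) : (∑ i : Fin m, C (c i) * X ^ (i : ℕ)).degree < ((m:ℕ) : WithBot ℕ) := by
  apply lt_of_le_of_lt (Polynomial.degree_sum_le _ _)
  rw [Finset.sup_lt_iff (by exact_mod_cast WithBot.bot_lt_coe m)]
  intro i _
  exact lt_of_le_of_lt (Polynomial.degree_C_mul_X_pow_le _ _) (by exact_mod_cast i.isLt)

lemma polyOf_monic (c : Fin m → ℂ) : (polyOf m c).Monic :=
  Polynomial.monic_X_pow_add (sum_degree_lt m c)

lemma polyOf_degree (c : Fin m → ℂ) : (polyOf m c).degree = m := by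
  rw [polyOf, Polynomial.degree_add_eq_left_of_degree_lt, Polynomial.degree_X_pow]
  rw [Polynomial.degree_X_pow]
  exact sum_degree_lt m c

lemma polyOf_natDegree (c : Fin m → ℂ) : (polyOf m c).natDegree = m :=
  Polynomial.natDegree_eq_of_degree_eq_some (polyOf_degree m c)

lemma polyOf_coeff (c : Fin m → ℂ) (i : Fin m) : (polyOf m c).coeff i = c i := by
  rw [polyOf, Polynomial.coeff_add, Polynomial.coeff_X_pow, if_neg (by exact_mod_cast ne_of_lt i.isLt),
    Polynomial.finset_sum_coeff]
  rw [Finset.sum_eq_single i]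
  · simp
  · intro j _ hj
    simp only [Polynomial.coeff_C_mul, Polynomial.coeff_X_pow]
    rw [if_neg (by simpa [Fin.val_eq_val] using (Ne.symm hj)), mul_zero]
  · simp

lemma polyOf_eq (p : ℂ[X]) (hp : p.Monic) (hd : p.natDegree = m)
    (c : Fin m → ℂ) (hc : ∀ i : Fin m, p.coeff i = c i) : polyOf m c = p := by
  ext n
  rcases lt_trichotomy n m with h | h | h
  · rw [polyOf_coeff m c ⟨n, h⟩, ← hc ⟨n, h⟩]
  · subst h
    rw [show (polyOf n c).coeff n = 1 by
        simpa [polyOf_natDegree] using (polyOf_monic n c).coeff_natDegree]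
    rw [show p.coeff n = 1 by simpa [hd] using hp.coeff_natDegree]
  · rw [Polynomial.coeff_eq_zero_of_natDegree_lt (by rwa [polyOf_natDegree]),
      Polynomial.coeff_eq_zero_of_natDegree_lt (by rwa [hd])]

/-- product of `X - r i` -/
noncomputable def prodOf (r : Fin m → ℂ) : ℂ[X] :=
  (Multiset.map (fun z => X - C z) (Multiset.map r Finset.univ.val)).prod

lemma prodOf_monic (r : Fin m → ℂ) : (prodOf m r).Monic := by
  rw [prodOf, Multiset.map_map]
  exact Polynomial.monic_multiset_prod_of_monic _ _ (fun i _ => Polynomial.monic_X_sub_C (r i))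

lemma prodOf_natDegree (r : Fin m → ℂ) : (prodOf m r).natDegree = m := by
  rw [prodOf, Polynomial.natDegree_multiset_prod_X_sub_C_eq_card]
  simp

lemma prodOf_roots (r : Fin m → ℂ) : (prodOf m r).roots = Multiset.map r Finset.univ.val :=
  Polynomial.roots_multiset_prod_X_sub_C _

/-- Vieta map sending roots to low coefficients. -/
noncomputable def vieta (r : Fin m → ℂ) : Fin m → ℂ := fun i => (prodOf m r).coeff i

lemma coeff_prod_esymm (r : Fin m → ℂ) {k : ℕ} (hk : k ≤ m) :
    (Multiset.map (fun z => X - C z) (Multiset.map r Finset.univ.val)).prod.coeff k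
      = (-1) ^ (m - k) * ∑ t ∈ Finset.powersetCard (m - k) Finset.univ, t.prod r := by
  have hcard : Multiset.card (Multiset.map r Finset.univ.val) = m := by simp
  rw [Multiset.prod_X_sub_C_coeff _ (by rwa [hcard]), hcard, Finset.esymm_map_val]

lemma vieta_continuous : Continuous (vieta m) := by
  apply continuous_pi
  intro i
  have : (fun r : Fin m → ℂ => vieta m r i)
      = fun r => (-1) ^ (m - (i:ℕ)) * ∑ t ∈ Finset.powersetCard (m - (i:ℕ)) Finset.univ,
          t.prod r := by
    funext r
    exact coeff_prod_esymm m r i.isLt.le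
  rw [this]
  exact continuous_const.mul (continuous_finset_sum _ (fun t _ =>
    continuous_finset_prod _ (fun j _ => continuous_apply j)))


lemma polyOf_vieta (r : Fin m → ℂ) : polyOf m (vieta m r) = prodOf m r :=
  polyOf_eq m (prodOf m r) (prodOf_monic m r) (prodOf_natDegree m r) _ (fun _ => rfl)

lemma card_roots_polyOf (c : Fin m → ℂ) : Multiset.card (polyOf m c).roots = m := by
  have h := (Polynomial.splits_iff_card_roots).mp (IsAlgClosed.splits (polyOf m c))
  rwa [polyOf_natDegree] at h

lemma vieta_surjective : Function.Surjective (vieta m) := by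
  intro c
  have hsplit := card_roots_polyOf m c
  -- enumerate the roots by a list
  obtain ⟨l, hl⟩ : ∃ l : List ℂ, l = (polyOf m c).roots.toList := ⟨_, rfl⟩
  have hlen : l.length = m := by
    rw [hl, Multiset.length_toList, hsplit]
  have hml : (polyOf m c).roots = (l : Multiset ℂ) := by rw [hl, Multiset.coe_toList]
  subst hlen
  refine ⟨l.get, ?_⟩
  have huniv : Multiset.map l.get Finset.univ.val = (l : Multiset ℂ) := by
    rw [Fin.univ_val_map]
    exact congrArg (fun t : List ℂ => (t : Multiset ℂ)) (List.ofFn_get l)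
  have : prodOf l.length l.get = polyOf l.length c := by
    rw [prodOf, huniv, ← hml]
    exact Polynomial.prod_multiset_X_sub_C_of_monic_of_roots_card_eq (polyOf_monic _ c)
      (by rw [hsplit, polyOf_natDegree])
  funext i
  show (prodOf _ l.get).coeff i = c i
  rw [this, polyOf_coeff]

/-- any root of `polyOf c` is bounded. -/
lemma root_bound (c : Fin m → ℂ) {z : ℂ} (hz : z ∈ (polyOf m c).roots) :
    ‖z‖ ≤ max 1 (∑ i : Fin m, ‖c i‖) := by
  have hroot : Polynomial.eval z (polyOf m c) = 0 :=
    (Polynomial.isRoot_of_mem_roots hz)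
  have heval : z ^ m = -∑ i : Fin m, c i * z ^ (i : ℕ) := by
    have : z ^ m + ∑ i : Fin m, c i * z ^ (i : ℕ) = 0 := by
      simpa [polyOf, Polynomial.eval_finset_sum] using hroot
    linear_combination this
  by_cases h1 : ‖z‖ ≤ 1
  · exact le_max_of_le_left h1
  push_neg at h1
  have hm : m ≠ 0 := by
    rintro rfl
    simp at heval
  have hb : ‖z‖ ^ m ≤ (∑ i : Fin m, ‖c i‖) * ‖z‖ ^ (m - 1) := by
    calc ‖z‖ ^ m = ‖z ^ m‖ := (norm_pow z m).symm
    _ = ‖∑ i : Fin m, c i * z ^ (i : ℕ)‖ := by rw [heval, norm_neg]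
    _ ≤ ∑ i : Fin m, ‖c i * z ^ (i : ℕ)‖ := norm_sum_le _ _
    _ ≤ ∑ i : Fin m, ‖c i‖ * ‖z‖ ^ (m - 1) := by
        apply Finset.sum_le_sum
        intro i _
        rw [norm_mul, norm_pow]
        exact mul_le_mul_of_nonneg_left
          (pow_le_pow_right₀ h1.le (Nat.le_sub_one_of_lt i.isLt)) (norm_nonneg _)
    _ = (∑ i : Fin m, ‖c i‖) * ‖z‖ ^ (m - 1) := by rw [Finset.sum_mul]
  have hzpos : (0:ℝ) < ‖z‖ ^ (m - 1) := pow_pos (lt_trans one_pos h1) _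
  have hmm : ‖z‖ ^ m = ‖z‖ ^ (m - 1) * ‖z‖ := by
    rw [← pow_succ, Nat.sub_add_cancel (Nat.one_le_iff_ne_zero.mpr hm)]
  rw [hmm, mul_comm (‖z‖ ^ (m-1)) ‖z‖, mul_comm (∑ i : Fin m, ‖c i‖) (‖z‖ ^ (m-1))] at hb
  exact le_max_of_le_right (le_of_mul_le_mul_left (by linarith [hb]) hzpos)

lemma vieta_isProperMap : IsProperMap (vieta m) := by
  rw [isProperMap_iff_isCompact_preimage]
  refine ⟨vieta_continuous m, fun K hK => ?_⟩
  obtain ⟨R, hR⟩ := hK.isBounded.subset_closedBall 0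
  set B : ℝ := max 1 (m * max R 0) with hB
  have hsub : vieta m ⁻¹' K ⊆ Metric.closedBall 0 B := by
    intro r hr
    have hrK : vieta m r ∈ K := hr
    have hnorm : ‖vieta m r‖ ≤ max R 0 := by
      have := hR hrK
      rw [Metric.mem_closedBall, dist_zero_right] at this
      exact le_max_of_le_left this
    rw [Metric.mem_closedBall, dist_zero_right]
    rw [pi_norm_le_iff_of_nonneg (le_max_of_le_left zero_le_one)]
    intro i
    have hri : r i ∈ (polyOf m (vieta m r)).roots := by
      rw [polyOf_vieta, prodOf_roots]
      exact Multiset.mem_map_of_mem r (Finset.mem_univ_val i)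
    refine le_trans (root_bound m _ hri) (max_le_max le_rfl ?_)
    calc ∑ i : Fin m, ‖vieta m r i‖ ≤ ∑ _i : Fin m, max R 0 := by
          apply Finset.sum_le_sum
          intro i _
          exact le_trans (norm_le_pi_norm (vieta m r) i) hnorm
      _ = m * max R 0 := by rw [Finset.sum_const, Finset.card_univ, Fintype.card_fin,
            nsmul_eq_mul]
  exact IsCompact.of_isClosed_subset (isCompact_closedBall 0 B)
    (hK.isClosed.preimage (vieta_continuous m)) hsub

/-- The `k`-th coefficient of the truncated-inverted-roots polynomial, as a function of the
coefficients of the original monic polynomial. -/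
noncomputable def trc (c₀ : ℝ) (k : ℕ) (c : Fin m → ℂ) : ℂ :=
  ((Multiset.map (fun z => X - C z) (Multiset.map (psi c₀) (polyOf m c).roots)).prod).coeff k

lemma trc_continuous {c₀ : ℝ} (hc₀ : 0 < c₀) {k : ℕ} (hk : k ≤ m) :
    Continuous (trc m c₀ k) := by
  have hq := (vieta_isProperMap m).isClosedMap.isQuotientMap (vieta_continuous m)
    (vieta_surjective m)
  rw [hq.continuous_iff]
  have heq : (trc m c₀ k) ∘ (vieta m) = fun r : Fin m → ℂ =>
      (-1) ^ (m - k) * ∑ t ∈ Finset.powersetCard (m - k) Finset.univ,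
        t.prod (fun i => psi c₀ (r i)) := by
    funext r
    show (trc m c₀ k) (vieta m r) = _
    rw [trc, polyOf_vieta, prodOf_roots, Multiset.map_map,
      show ((fun z => (X:ℂ[X]) - C z) ∘ psi c₀) = fun z => X - C (psi c₀ z) from rfl]
    have h2 : Multiset.map (fun z => (X:ℂ[X]) - C (psi c₀ z)) (Multiset.map r Finset.univ.val)
        = Multiset.map (fun z => X - C z)
            (Multiset.map (fun i => psi c₀ (r i)) Finset.univ.val) := by
      rw [Multiset.map_map, Multiset.map_map]
      rfl
    rw [h2]
    have hcard : Multiset.card (Multiset.map (fun i => psi c₀ (r i)) Finset.univ.val) = m := by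
      simp
    rw [Multiset.prod_X_sub_C_coeff _ (by rwa [hcard]), hcard, Finset.esymm_map_val]
  rw [heq]
  apply continuous_const.mul
  exact continuous_finset_sum _ (fun t _ => continuous_finset_prod _
    (fun i _ => (psi_continuous hc₀).comp (continuous_apply i)))


/-- Evaluation at a point, as a ring homomorphism. -/
def evalRH {M : Type*} [TopologicalSpace M] (x : M) : C(M, ℝ) →+* ℝ where
  toFun f := f x
  map_one' := rfl
  map_mul' _ _ := rfl
  map_zero' := rfl
  map_add' _ _ := rfl


end SIF

open ContinuousMap

/-- Let `M` be a compact topological space, `N` a topological space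
and `π : M → N` a continuous surjection. If there exists `g ∈ C(M, ℝ)` such that every
element of `C(M, ℝ)` is a polynomial in `g` with coefficients in the image of `φ_π`,
then `g` (and hence every element of `C(M, ℝ)`) is integral over `C(N, ℝ)` via `φ_π`;
consequently `C(M, ℝ)` is a finitely generated `C(N, ℝ)`-module. -/
theorem simple_implies_finite {M N : Type*} [TopologicalSpace M] [CompactSpace M]
    [TopologicalSpace N] (π : C(M, N)) (hsurj : Function.Surjective π)
    (g : C(M, ℝ))
    (hgen : ∀ h : C(M, ℝ), ∃ q : Polynomial C(N, ℝ), Polynomial.eval₂ (phiPi π) g q = h) :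
    (phiPi π).IsIntegralElem g ∧ (phiPi π).IsIntegral ∧ (phiPi π).Finite := by
  classical
  letI : Algebra C(N, ℝ) C(M, ℝ) := (phiPi π).toAlgebra
  set c : ℝ := ‖g‖ + 1 with hc
  set g₁ : C(M, ℝ) := g + ContinuousMap.const M c with hg₁def
  set K : ℝ := ‖g‖ + c with hKdef
  have habs : ∀ x : M, |g x| ≤ ‖g‖ := by
    intro x
    have := ContinuousMap.norm_coe_le_norm g x
    rwa [Real.norm_eq_abs] at this
  have hg₁1 : ∀ x : M, 1 ≤ g₁ x := by
    intro x
    show 1 ≤ g x + c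
    have h2 := abs_le.mp (habs x)
    simp only [hc]
    linarith [h2.1]
  have hg₁K : ∀ x : M, g₁ x ≤ K := by
    intro x
    show g x + c ≤ K
    have h2 := abs_le.mp (habs x)
    simp only [hKdef]
    linarith [h2.2]
  have hg₁pos : ∀ x : M, (0:ℝ) < g₁ x := fun x => lt_of_lt_of_le one_pos (hg₁1 x)
  have hg₁ne : ∀ x : M, g₁ x ≠ 0 := fun x => ne_of_gt (hg₁pos x)
  have hKpos : (0:ℝ) < K := by
    simp only [hKdef, hc]
    positivity
  set δ : ℝ := K⁻¹ with hδdef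
  have hδpos : 0 < δ := inv_pos.mpr hKpos
  -- the inverse of g₁
  set u : C(M, ℝ) := ⟨fun x => (g₁ x)⁻¹, Continuous.inv₀ g₁.continuous hg₁ne⟩ with hudef
  have hu : ∀ x : M, u x = (g₁ x)⁻¹ := fun _ => rfl
  have huδ : ∀ x : M, δ ≤ u x := by
    intro x
    rw [hu]
    exact (inv_le_inv₀ hKpos (hg₁pos x)).mpr (hg₁K x)
  have hug : ∀ x : M, g₁ x * u x = 1 := fun x => mul_inv_cancel₀ (hg₁ne x)
  -- φ of a constant is a constant
  have hphconst : phiPi π (ContinuousMap.const N c) = ContinuousMap.const M c := rfl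
  -- polynomial expressing u in terms of g₁
  obtain ⟨q₀, hq₀⟩ := hgen u
  set q : Polynomial C(N, ℝ) :=
    q₀.comp (Polynomial.X - Polynomial.C (ContinuousMap.const N c)) with hqdef
  have hq : Polynomial.eval₂ (phiPi π) g₁ q = u := by
    rw [hqdef, Polynomial.eval₂_comp, Polynomial.eval₂_sub, Polynomial.eval₂_X,
      Polynomial.eval₂_C, hphconst]
    have : g₁ - ContinuousMap.const M c = g := by
      rw [hg₁def]
      exact add_sub_cancel_right g _
    rw [this, hq₀]
  set n : ℕ := q.natDegree with hndef
  set m : ℕ := n + 1 with hmdef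
  set d : ℕ → C(N, ℝ) := fun i => q.coeff i with hddef
  -- pointwise relation for u as polynomial in g₁
  have hrel : ∀ x : M, u x = ∑ i ∈ Finset.range (n + 1), d i (π x) * (g₁ x) ^ i := by
    intro x
    have e1 : SIF.evalRH x u = SIF.evalRH x (Polynomial.eval₂ (phiPi π) g₁ q) := by rw [hq]
    rw [Polynomial.hom_eval₂, Polynomial.eval₂_eq_sum_range] at e1
    exact e1
  -- monic relation for u
  have hrelu : ∀ x : M, (u x) ^ m = ∑ j ∈ Finset.range m, d (n - j) (π x) * (u x) ^ j := by
    intro x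
    have h2 : ∀ i ∈ Finset.range (n + 1),
        d i (π x) * (g₁ x) ^ i * (u x) ^ n = d i (π x) * (u x) ^ (n - i) := by
      intro i hi
      have hi' : i ≤ n := Nat.lt_succ_iff.mp (Finset.mem_range.mp hi)
      have hsplit : (u x) ^ n = (u x) ^ i * (u x) ^ (n - i) := by
        rw [← pow_add, Nat.add_sub_cancel' hi']
      rw [mul_assoc, hsplit, ← mul_assoc ((g₁ x) ^ i), ← mul_pow, hug x, one_pow, one_mul]
    have h1 : (u x) ^ m = ∑ i ∈ Finset.range (n + 1), d i (π x) * (u x) ^ (n - i) :=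
      calc (u x) ^ m = u x * (u x) ^ n := by rw [hmdef, pow_succ, mul_comm]
      _ = (∑ i ∈ Finset.range (n + 1), d i (π x) * (g₁ x) ^ i) * (u x) ^ n := by rw [← hrel x]
      _ = ∑ i ∈ Finset.range (n + 1), d i (π x) * (g₁ x) ^ i * (u x) ^ n := Finset.sum_mul _ _ _
      _ = ∑ i ∈ Finset.range (n + 1), d i (π x) * (u x) ^ (n - i) := Finset.sum_congr rfl h2
    rw [h1, show Finset.range (n + 1) = Finset.range m from by rw [hmdef],
      ← Finset.sum_range_reflect (fun i => d i (π x) * (u x) ^ (n - i)) m]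
    apply Finset.sum_congr rfl
    intro j hj
    have hj2 := Finset.mem_range.mp hj
    rw [hmdef] at hj2
    have hj' : j ≤ n := Nat.lt_succ_iff.mp hj2
    have e1 : m - 1 - j = n - j := by rw [hmdef, Nat.add_sub_cancel]
    show d (m - 1 - j) (π x) * (u x) ^ (n - (m - 1 - j)) = _
    rw [e1, Nat.sub_sub_self hj']
  -- complex coefficient vector
  set cv : N → Fin m → ℂ := fun y i => ((-(d (n - (i : ℕ)) y) : ℝ) : ℂ) with hcvdef
  have hcvcont : Continuous cv := by
    apply continuous_pi
    intro i
    exact Complex.continuous_ofReal.comp ((d (n - (i : ℕ))).continuous.neg)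
  -- u x is a root
  have hmem : ∀ x : M, ((u x : ℝ) : ℂ) ∈ (SIF.polyOf m (cv (π x))).roots := by
    intro x
    rw [Polynomial.mem_roots']
    refine ⟨(SIF.polyOf_monic m (cv (π x))).ne_zero, ?_⟩
    show Polynomial.eval _ _ = 0
    rw [SIF.polyOf]
    rw [Polynomial.eval_add, Polynomial.eval_pow, Polynomial.eval_X,
      Polynomial.eval_finset_sum]
    simp only [Polynomial.eval_mul, Polynomial.eval_C, Polynomial.eval_pow, Polynomial.eval_X]
    rw [Fin.sum_univ_eq_sum_range (fun i => ((-(d (n - i) (π x)) : ℝ) : ℂ) * ((u x : ℝ) : ℂ) ^ i) m]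
    have hreal : (u x) ^ m + ∑ i ∈ Finset.range m, (-(d (n - i) (π x))) * (u x) ^ i = 0 := by
      rw [hrelu x]
      rw [← Finset.sum_add_distrib]
      apply Finset.sum_eq_zero
      intro i _
      ring
    exact_mod_cast hreal
  -- real coefficient functions
  have hEcont : ∀ k : ℕ, k ≤ m → Continuous (fun y : N => (SIF.trc m δ k (cv y)).re) :=
    fun k hk => Complex.continuous_re.comp ((SIF.trc_continuous m hδpos hk).comp hcvcont)
  set E : ℕ → C(N, ℝ) := fun k =>
    if hk : k ≤ m then ⟨fun y => (SIF.trc m δ k (cv y)).re, hEcont k hk⟩ else 0 with hEdef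
  have hEapp : ∀ k : ℕ, k ≤ m → ∀ y : N, E k y = (SIF.trc m δ k (cv y)).re := by
    intro k hk y
    rw [hEdef]
    simp only [dif_pos hk]
    rfl
  -- the final pointwise identity
  have hfinal : ∀ x : M,
      (g₁ x) ^ m + ∑ k ∈ Finset.range m, E k (π x) * (g₁ x) ^ k = 0 := by
    intro x
    set y : N := π x with hydef
    set W : Polynomial ℂ :=
      (Multiset.map (fun z => Polynomial.X - Polynomial.C z)
        (Multiset.map (SIF.psi δ) (SIF.polyOf m (cv y)).roots)).prod with hWdef
    have hWcoeff : ∀ k : ℕ, W.coeff k = SIF.trc m δ k (cv y) := fun _ => rfl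
    have hWmonic : W.Monic :=
      Polynomial.monic_multiset_prod_of_monic
        (Multiset.map (SIF.psi δ) (SIF.polyOf m (cv y)).roots)
        (fun z => Polynomial.X - Polynomial.C z)
        (fun z _ => Polynomial.monic_X_sub_C z)
    have hWdeg : W.natDegree = m := by
      rw [hWdef, Polynomial.natDegree_multiset_prod_X_sub_C_eq_card, Multiset.card_map,
        SIF.card_roots_polyOf]
    have hWeval : Polynomial.eval ((g₁ x : ℝ) : ℂ) W = 0 := by
      rw [hWdef, Polynomial.eval_multiset_prod]
      apply Multiset.prod_eq_zero
      rw [Multiset.map_map]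
      apply Multiset.mem_map.mpr
      refine ⟨SIF.psi δ ((u x : ℝ) : ℂ), Multiset.mem_map_of_mem _ (hmem x), ?_⟩
      show Polynomial.eval _ _ = 0
      rw [SIF.psi_real hδpos (huδ x), Polynomial.eval_sub, Polynomial.eval_X,
        Polynomial.eval_C]
      rw [hu x]
      rw [show (((g₁ x)⁻¹ : ℝ) : ℂ) = ((g₁ x : ℝ) : ℂ)⁻¹ from Complex.ofReal_inv _, inv_inv]
      ring
    have hexp := Polynomial.eval_eq_sum_range (p := W) ((g₁ x : ℝ) : ℂ)
    rw [hWdeg, hWeval, Finset.sum_range_succ] at hexp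
    rw [show W.coeff m = 1 by
      have := hWmonic.coeff_natDegree
      rwa [hWdeg] at this] at hexp
    have hre := congrArg Complex.re hexp
    simp only [Complex.zero_re, Complex.add_re, one_mul] at hre
    have hsums : (∑ i ∈ Finset.range m, W.coeff i * ((g₁ x : ℝ) : ℂ) ^ i).re
        = ∑ k ∈ Finset.range m, E k y * (g₁ x) ^ k := by
      rw [Complex.re_sum]
      apply Finset.sum_congr rfl
      intro k hk
      have hk' : k ≤ m := (Finset.mem_range.mp hk).le
      rw [hEapp k hk' y, hWcoeff k, ← Complex.ofReal_pow, Complex.mul_re, Complex.ofReal_re,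
        Complex.ofReal_im, mul_zero, sub_zero]
    rw [hsums] at hre
    have hpow : (((g₁ x : ℝ) : ℂ) ^ m).re = (g₁ x) ^ m := by
      rw [← Complex.ofReal_pow, Complex.ofReal_re]
    rw [hpow] at hre
    linarith [hre]
  -- the monic polynomial over C(N, ℝ)
  set Q : Polynomial C(N, ℝ) :=
    Polynomial.X ^ m + ∑ k ∈ Finset.range m, Polynomial.C (E k) * Polynomial.X ^ k with hQdef
  have hQmonic : Q.Monic := by
    apply Polynomial.monic_X_pow_add
    apply lt_of_le_of_lt (Polynomial.degree_sum_le _ _)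
    rw [Finset.sup_lt_iff (by exact_mod_cast WithBot.bot_lt_coe m)]
    intro k hk
    exact lt_of_le_of_lt (Polynomial.degree_C_mul_X_pow_le _ _)
      (by exact_mod_cast Finset.mem_range.mp hk)
  have hQeval : Polynomial.eval₂ (phiPi π) g₁ Q = 0 := by
    rw [hQdef, Polynomial.eval₂_add, Polynomial.eval₂_X_pow, Polynomial.eval₂_finset_sum]
    simp only [Polynomial.eval₂_mul, Polynomial.eval₂_C, Polynomial.eval₂_X_pow]
    ext x
    rw [ContinuousMap.add_apply, ContinuousMap.pow_apply, ContinuousMap.sum_apply]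
    have : ∀ k ∈ Finset.range m, ((phiPi π) (E k) * g₁ ^ k) x = E k (π x) * (g₁ x) ^ k := by
      intro k _
      rw [ContinuousMap.mul_apply, ContinuousMap.pow_apply]
      rfl
    rw [Finset.sum_congr rfl this]
    show (g₁ x) ^ m + _ = (0 : C(M, ℝ)) x
    rw [hfinal x]
    rfl
  -- integrality of g₁, hence of g
  have hint₁ : IsIntegral C(N, ℝ) g₁ := by
    refine ⟨Q, hQmonic, ?_⟩
    rw [(phiPi π).algebraMap_toAlgebra]
    exact hQeval
  have hintg : IsIntegral C(N, ℝ) g := by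
    have h2 : IsIntegral C(N, ℝ) ((algebraMap C(N, ℝ) C(M, ℝ)) (ContinuousMap.const N c)) :=
      isIntegral_algebraMap
    have h3 := hint₁.sub h2
    have h4 : g₁ - (algebraMap C(N, ℝ) C(M, ℝ)) (ContinuousMap.const N c) = g := by
      rw [(phiPi π).algebraMap_toAlgebra, hphconst, hg₁def]
      exact add_sub_cancel_right g _
    rwa [h4] at h3
  -- module finiteness
  have hadj : Algebra.adjoin C(N, ℝ) {g} = ⊤ := by
    rw [Algebra.adjoin_singleton_eq_range_aeval, eq_top_iff]
    rintro h -
    obtain ⟨q', hq'⟩ := hgen h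
    rw [AlgHom.mem_range]
    refine ⟨q', ?_⟩
    rw [Polynomial.aeval_def, (phiPi π).algebraMap_toAlgebra]
    exact hq'
  have hfg := hintg.fg_adjoin_singleton
  rw [hadj, Algebra.top_toSubmodule] at hfg
  have hmodfin : Module.Finite C(N, ℝ) C(M, ℝ) := Module.finite_def.mpr hfg
  have hFin : (phiPi π).Finite := hmodfin
  refine ⟨?_, hFin.to_isIntegral, hFin⟩
  have := hintg
  rwa [← (phiPi π).algebraMap_toAlgebra]
end
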